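/- arXiv:2602.14007 — 4 statements merged into one kernel-verified Lean document; each statement's English description precedes it below -/
import Mathlib

section
/- For every tuple 𝔸 = (A₁, …, Aₙ) of d×d positive-definite matrices, the function F₁(·; 𝔸) attains its infimum on ℙ_d; that is, there exists M ∈ ℙ_d such that F₁(M; 𝔸) ≤ F₁(X; 𝔸) for all X ∈ ℙ_d. -/
noncomputable section

open Matrix
open scoped ComplexOrder

/-- Real functional calculus of a matrix, via the Hermitian eigendecomposition
(junk value `0` if the matrix is not Hermitian). -/
noncomputable def fcal {d : ℕ} (f : ℝ → ℝ) (A : Matrix (Fin d) (Fin d) ℂ) :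
    Matrix (Fin d) (Fin d) ℂ :=
  if hA : A.IsHermitian then hA.cfc f else 0

/-- Matrix logarithm of a positive-definite matrix (functional calculus). -/
noncomputable def mlog {d : ℕ} (A : Matrix (Fin d) (Fin d) ℂ) : Matrix (Fin d) (Fin d) ℂ :=
  fcal Real.log A

/-- Real power of a positive-definite matrix (functional calculus). -/
noncomputable def mpow {d : ℕ} (A : Matrix (Fin d) (Fin d) ℂ) (t : ℝ) :
    Matrix (Fin d) (Fin d) ℂ :=
  fcal (fun x => x ^ t) A

/-- Frobenius (Hilbert–Schmidt) norm of a matrix. -/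
noncomputable def hsNorm {d : ℕ} (A : Matrix (Fin d) (Fin d) ℂ) : ℝ :=
  Real.sqrt (∑ i, ∑ j, ‖A i j‖ ^ 2)

/-- The Riemannian trace-metric distance δ(A, B) = ‖log (A^{-1/2} B A^{-1/2})‖_HS. -/
noncomputable def rdist {d : ℕ} (A B : Matrix (Fin d) (Fin d) ℂ) : ℝ :=
  hsNorm (mlog (mpow A (-(1 / 2 : ℝ)) * B * mpow A (-(1 / 2 : ℝ))))

/-- The t-weighted geometric mean A #_t B = A^{1/2} (A^{-1/2} B A^{-1/2})^t A^{1/2}. -/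
noncomputable def gmean {d : ℕ} (A B : Matrix (Fin d) (Fin d) ℂ) (t : ℝ) :
    Matrix (Fin d) (Fin d) ℂ :=
  mpow A (1 / 2 : ℝ) * mpow (mpow A (-(1 / 2 : ℝ)) * B * mpow A (-(1 / 2 : ℝ))) t *
    mpow A (1 / 2 : ℝ)

/-- The objective function F_p(X; 𝔸) = (1/n) ∑ₖ δ(X, Aₖ)^p. -/
noncomputable def Fobj {d n : ℕ} (p : ℝ) (A : Fin n → Matrix (Fin d) (Fin d) ℂ)
    (X : Matrix (Fin d) (Fin d) ℂ) : ℝ :=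
  (1 / (n : ℝ)) * ∑ k, rdist X (A k) ^ p

namespace MyCfc
variable {d : ℕ} {A : Matrix (Fin d) (Fin d) ℂ} (hA : A.IsHermitian)

local notation "U" => (Matrix.IsHermitian.eigenvectorUnitary hA : Matrix (Fin d) (Fin d) ℂ)

lemma cfc_mul (f g : ℝ → ℝ) : hA.cfc f * hA.cfc g = hA.cfc (fun x => f x * g x) := by
  unfold Matrix.IsHermitian.cfc
  simp only [Unitary.conjStarAlgAut_apply, Unitary.coe_star]
  have h1 : (star U) * U = 1 := Unitary.coe_star_mul_self _
  calc U * diagonal (RCLike.ofReal ∘ f ∘ hA.eigenvalues) * star U *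
        (U * diagonal (RCLike.ofReal ∘ g ∘ hA.eigenvalues) * star U)
      = U * (diagonal (RCLike.ofReal ∘ f ∘ hA.eigenvalues) * ((star U * U) *
          diagonal (RCLike.ofReal ∘ g ∘ hA.eigenvalues))) * star U := by
        simp only [mul_assoc]
    _ = U * diagonal (RCLike.ofReal ∘ (fun x => f x * g x) ∘ hA.eigenvalues) * star U := by
        rw [h1, one_mul, diagonal_mul_diagonal]
        congr 2
        rw [diagonal_eq_diagonal_iff]
        intro i
        simp

lemma cfc_add (f g : ℝ → ℝ) : hA.cfc f + hA.cfc g = hA.cfc (fun x => f x + g x) := by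
  unfold Matrix.IsHermitian.cfc
  simp only [Unitary.conjStarAlgAut_apply, Unitary.coe_star]
  rw [← add_mul, ← mul_add, diagonal_add]
  congr 2
  rw [diagonal_eq_diagonal_iff]
  intro i
  simp

lemma cfc_congr {f g : ℝ → ℝ} (h : ∀ i, f (hA.eigenvalues i) = g (hA.eigenvalues i)) :
    hA.cfc f = hA.cfc g := by
  unfold Matrix.IsHermitian.cfc
  simp only [Unitary.conjStarAlgAut_apply, Unitary.coe_star]
  congr 2
  rw [diagonal_eq_diagonal_iff]
  intro i
  simp [h i]

lemma cfc_one : hA.cfc (fun _ => 1) = 1 := by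
  unfold Matrix.IsHermitian.cfc
  simp only [Unitary.conjStarAlgAut_apply, Unitary.coe_star]
  have : diagonal (RCLike.ofReal ∘ (fun _ => (1:ℝ)) ∘ hA.eigenvalues)
      = (1 : Matrix (Fin d) (Fin d) ℂ) := by
    rw [← diagonal_one, diagonal_eq_diagonal_iff]; intro i; simp
  rw [this, mul_one]
  exact Unitary.coe_mul_star_self _

lemma cfc_id : hA.cfc (fun x => x) = A := (hA.spectral_theorem).symm

lemma cfc_smul (c : ℝ) (f : ℝ → ℝ) : c • hA.cfc f = hA.cfc (fun x => c * f x) := by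
  unfold Matrix.IsHermitian.cfc
  simp only [Unitary.conjStarAlgAut_apply, Unitary.coe_star]
  rw [mul_assoc, ← mul_smul_comm, ← smul_mul_assoc, ← mul_assoc]
  congr 2
  rw [← diagonal_smul, diagonal_eq_diagonal_iff]
  intro i
  simp [Complex.real_smul]

lemma cfc_herm (f : ℝ → ℝ) : (hA.cfc f).IsHermitian := by
  have h : star (hA.cfc f) = hA.cfc f := by
    unfold Matrix.IsHermitian.cfc
    simp only [Unitary.conjStarAlgAut_apply, Unitary.coe_star]
    rw [Matrix.star_mul, Matrix.star_mul, star_star]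
    have hd : star (diagonal (RCLike.ofReal ∘ f ∘ hA.eigenvalues) : Matrix (Fin d) (Fin d) ℂ)
        = diagonal (RCLike.ofReal ∘ f ∘ hA.eigenvalues) := by
      rw [star_eq_conjTranspose, diagonal_conjTranspose, diagonal_eq_diagonal_iff]
      intro i
      simp [Pi.star_def]
    rw [hd, mul_assoc]
  show (hA.cfc f)ᴴ = hA.cfc f
  rw [← star_eq_conjTranspose]
  exact h

lemma cfc_sub (f g : ℝ → ℝ) : hA.cfc f - hA.cfc g = hA.cfc (fun x => f x - g x) := by
  rw [sub_eq_add_neg, ← neg_one_smul ℝ (hA.cfc g), cfc_smul, cfc_add]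
  exact cfc_congr hA fun i => by ring

lemma cfc_posSemidef {f : ℝ → ℝ} (h : ∀ i, 0 ≤ f (hA.eigenvalues i)) :
    (hA.cfc f).PosSemidef := by
  unfold Matrix.IsHermitian.cfc
  simp only [Unitary.conjStarAlgAut_apply, Unitary.coe_star]
  have hd : PosSemidef (diagonal (RCLike.ofReal ∘ f ∘ hA.eigenvalues) :
      Matrix (Fin d) (Fin d) ℂ) := by
    rw [posSemidef_diagonal_iff]
    intro i
    simpa using Complex.real_le_real.mpr (h i)
  have := hd.mul_mul_conjTranspose_same U
  rwa [← star_eq_conjTranspose] at this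

lemma posDef_conj {B C : Matrix (Fin d) (Fin d) ℂ} (hB : B.PosDef) (hC : IsUnit C) :
    (C * B * Cᴴ).PosDef := by
  exact hB.mul_mul_conjTranspose_same (Matrix.vecMul_injective_iff_isUnit.2 hC)

lemma cfc_posDef {f : ℝ → ℝ} (h : ∀ i, 0 < f (hA.eigenvalues i)) :
    (hA.cfc f).PosDef := by
  unfold Matrix.IsHermitian.cfc
  simp only [Unitary.conjStarAlgAut_apply, Unitary.coe_star]
  have hd : PosDef (diagonal (RCLike.ofReal ∘ f ∘ hA.eigenvalues) :
      Matrix (Fin d) (Fin d) ℂ) := by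
    rw [Matrix.posDef_diagonal_iff]
    intro i
    simpa using Complex.real_lt_real.mpr (h i)
  have hU : IsUnit U := (Unitary.toUnits (hA.eigenvectorUnitary)).isUnit
  have := posDef_conj hd hU
  rwa [← star_eq_conjTranspose] at this


variable {d : ℕ} {A : Matrix (Fin d) (Fin d) ℂ} (hA : A.IsHermitian)

def emb {d : ℕ} (A : Matrix (Fin d) (Fin d) ℂ) : EuclideanSpace ℂ (Fin d × Fin d) :=
  WithLp.toLp 2 (fun p => A p.1 p.2)

def demb {d : ℕ} (x : EuclideanSpace ℂ (Fin d × Fin d)) : Matrix (Fin d) (Fin d) ℂ :=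
  Matrix.of fun i j => x (i, j)

lemma demb_emb (A : Matrix (Fin d) (Fin d) ℂ) : demb (emb A) = A := rfl

lemma emb_demb (x : EuclideanSpace ℂ (Fin d × Fin d)) : emb (demb x) = x := rfl

lemma emb_sub (A B : Matrix (Fin d) (Fin d) ℂ) : emb (A - B) = emb A - emb B := rfl

lemma norm_emb (A : Matrix (Fin d) (Fin d) ℂ) : ‖emb A‖ = hsNorm A := by
  rw [EuclideanSpace.norm_eq, hsNorm]
  congr 1
  rw [Fintype.sum_prod_type]
  rfl

lemma dist_emb (A B : Matrix (Fin d) (Fin d) ℂ) : dist (emb A) (emb B) = hsNorm (A - B) := by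
  rw [dist_eq_norm, ← emb_sub, norm_emb]

lemma continuous_emb : Continuous (emb (d := d)) := by
  have : emb (d := d) = (WithLp.equiv 2 (Fin d × Fin d → ℂ)).symm ∘
      (fun A p => A p.1 p.2) := rfl
  rw [this]
  exact (PiLp.continuous_toLp 2 (fun _ : Fin d × Fin d => ℂ)).comp
    (continuous_pi fun p => continuous_id.matrix_elem p.1 p.2)

lemma continuous_demb : Continuous (demb (d := d)) := by
  apply continuous_matrix
  intro i j
  exact (continuous_apply (i, j)).comp (PiLp.continuous_ofLp 2 (fun _ : Fin d × Fin d => ℂ))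

lemma continuous_hsNorm : Continuous (hsNorm (d := d)) := by
  have : hsNorm (d := d) = (fun x => ‖x‖) ∘ emb := by
    funext A
    simp [norm_emb, Function.comp]
  rw [this]
  exact continuous_norm.comp continuous_emb

lemma tendsto_iff_emb {α : Type*} {l : Filter α} {g : α → Matrix (Fin d) (Fin d) ℂ}
    {A : Matrix (Fin d) (Fin d) ℂ} :
    Filter.Tendsto g l (nhds A) ↔ Filter.Tendsto (emb ∘ g) l (nhds (emb A)) := by
  constructor
  · intro h
    exact (continuous_emb.tendsto A).comp h
  · intro h
    have := (continuous_demb.tendsto (emb A)).comp h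
    simpa [Function.comp_def, demb_emb] using this


lemma hsNorm_eq_sqrt_trace (A : Matrix (Fin d) (Fin d) ℂ) :
    hsNorm A = Real.sqrt ((Matrix.trace (Aᴴ * A)).re) := by
  rw [hsNorm]
  congr 1
  have : (Matrix.trace (Aᴴ * A)).re = ∑ j, ∑ i, ‖A i j‖ ^ 2 := by
    rw [Matrix.trace]
    rw [Complex.re_sum]
    congr 1
    funext j
    rw [Matrix.diag, Matrix.mul_apply, Complex.re_sum]
    congr 1
    funext i
    rw [Matrix.conjTranspose_apply]
    have : (star (A i j)) * A i j = ((‖A i j‖ ^ 2 : ℝ) : ℂ) := by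
      rw [Complex.star_def, ← Complex.normSq_eq_conj_mul_self, Complex.normSq_eq_norm_sq]
    rw [this]
    exact Complex.ofReal_re _
  rw [this, Finset.sum_comm]

lemma trace_cfc (g : ℝ → ℝ) :
    Matrix.trace (hA.cfc g) = ∑ i, ((g (hA.eigenvalues i) : ℝ) : ℂ) := by
  unfold Matrix.IsHermitian.cfc
  simp only [Unitary.conjStarAlgAut_apply, Unitary.coe_star]
  rw [Matrix.trace_mul_cycle, Unitary.coe_star_mul_self, one_mul, Matrix.trace_diagonal]
  simp

lemma hsNorm_cfc (f : ℝ → ℝ) :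
    hsNorm (hA.cfc f) = Real.sqrt (∑ i, f (hA.eigenvalues i) ^ 2) := by
  rw [hsNorm_eq_sqrt_trace]
  congr 1
  have hsm : star (hA.cfc f) = hA.cfc f := (cfc_herm hA f)
  rw [← star_eq_conjTranspose, hsm, cfc_mul, trace_cfc, Complex.re_sum]
  congr 1
  funext i
  simp [pow_two]

lemma abs_le_hsNorm_cfc (f : ℝ → ℝ) (i : Fin d) :
    |f (hA.eigenvalues i)| ≤ hsNorm (hA.cfc f) := by
  rw [hsNorm_cfc, ← Real.sqrt_sq_eq_abs]
  apply Real.sqrt_le_sqrt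
  exact Finset.single_le_sum (f := fun j => f (hA.eigenvalues j) ^ 2)
    (fun j _ => sq_nonneg _) (Finset.mem_univ i)

lemma hsNorm_nonneg (A : Matrix (Fin d) (Fin d) ℂ) : 0 ≤ hsNorm A := Real.sqrt_nonneg _

lemma hsNorm_add_le (A B : Matrix (Fin d) (Fin d) ℂ) :
    hsNorm (A + B) ≤ hsNorm A + hsNorm B := by
  have : emb (A + B) = emb A + emb B := rfl
  rw [← norm_emb, ← norm_emb, ← norm_emb, this]
  exact norm_add_le _ _


lemma coe_smul_matrix (c : ℝ) (M : Matrix (Fin d) (Fin d) ℂ) :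
    (c : ℂ) • M = c • M := algebraMap_smul ℂ c M

lemma psd_smul {M : Matrix (Fin d) (Fin d) ℂ} (hM : M.PosSemidef) {c : ℝ} (hc : 0 ≤ c) :
    (c • M).PosSemidef := by
  rw [← coe_smul_matrix]
  refine .of_dotProduct_mulVec_nonneg ?_ ?_
  · show ((c:ℂ) • M)ᴴ = (c:ℂ) • M
    rw [Matrix.conjTranspose_smul, Complex.star_def, Complex.conj_ofReal, hM.1]
  · intro x
    rw [Matrix.smul_mulVec, dotProduct_smul, smul_eq_mul]
    exact mul_nonneg (by exact_mod_cast Complex.real_le_real.mpr hc) (hM.dotProduct_mulVec_nonneg x)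

lemma posDef_smul {M : Matrix (Fin d) (Fin d) ℂ} (hM : M.PosDef) {c : ℝ} (hc : 0 < c) :
    (c • M).PosDef := by
  rw [← coe_smul_matrix]
  refine .of_dotProduct_mulVec_pos ?_ ?_
  · show ((c:ℂ) • M)ᴴ = (c:ℂ) • M
    rw [Matrix.conjTranspose_smul, Complex.star_def, Complex.conj_ofReal, hM.1]
  · intro x hx
    rw [Matrix.smul_mulVec, dotProduct_smul, smul_eq_mul]
    exact mul_pos (by exact_mod_cast Complex.real_lt_real.mpr hc) (hM.dotProduct_mulVec_pos hx)

lemma psd_conj {P C : Matrix (Fin d) (Fin d) ℂ} (hP : P.PosSemidef) :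
    (C * P * Cᴴ).PosSemidef := hP.mul_mul_conjTranspose_same C

lemma psd_conj_sub {P Q C : Matrix (Fin d) (Fin d) ℂ} (h : (Q - P).PosSemidef) :
    (C * Q * Cᴴ - C * P * Cᴴ).PosSemidef := by
  have := h.mul_mul_conjTranspose_same C
  rwa [Matrix.mul_sub, Matrix.sub_mul] at this

lemma psd_trans {P Q R : Matrix (Fin d) (Fin d) ℂ} (h1 : (Q - P).PosSemidef)
    (h2 : (R - Q).PosSemidef) : (R - P).PosSemidef := by
  have := h2.add h1
  rwa [sub_add_sub_cancel] at this

/-- quadratic form at an eigenvector -/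
lemma eig_quadratic (i : Fin d) :
    dotProduct (star ⇑(hA.eigenvectorBasis i)) (A *ᵥ ⇑(hA.eigenvectorBasis i))
      = ((hA.eigenvalues i : ℝ) : ℂ) := by
  rw [hA.mulVec_eigenvectorBasis, dotProduct_smul]
  have hnorm : dotProduct (star ⇑(hA.eigenvectorBasis i)) ⇑(hA.eigenvectorBasis i)
      = 1 := by
    have h1 := hA.eigenvectorBasis.orthonormal.1 i
    have h2 : (inner ℂ (hA.eigenvectorBasis i) (hA.eigenvectorBasis i) : ℂ)
        = dotProduct (star ⇑(hA.eigenvectorBasis i)) ⇑(hA.eigenvectorBasis i) :=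
      (EuclideanSpace.inner_eq_star_dotProduct _ _).trans (dotProduct_comm _ _)
    rw [← h2, inner_self_eq_norm_sq_to_K, h1]
    norm_num
  rw [hnorm]
  simp [Complex.real_smul]


lemma cfc_const (c : ℝ) : hA.cfc (fun _ => c) = c • (1 : Matrix (Fin d) (Fin d) ℂ) := by
  rw [← cfc_one hA, cfc_smul]
  exact cfc_congr hA fun i => by ring

lemma cfc_le {f g : ℝ → ℝ} (h : ∀ i, f (hA.eigenvalues i) ≤ g (hA.eigenvalues i)) :
    (hA.cfc g - hA.cfc f).PosSemidef := by
  rw [cfc_sub]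
  exact cfc_posSemidef hA fun i => sub_nonneg.mpr (h i)

lemma eigvec_normalized (i : Fin d) :
    dotProduct (star ⇑(hA.eigenvectorBasis i)) ⇑(hA.eigenvectorBasis i) = 1 := by
  have h1 := hA.eigenvectorBasis.orthonormal.1 i
  have h2 : (inner ℂ (hA.eigenvectorBasis i) (hA.eigenvectorBasis i) : ℂ)
      = dotProduct (star ⇑(hA.eigenvectorBasis i)) ⇑(hA.eigenvectorBasis i) :=
    (EuclideanSpace.inner_eq_star_dotProduct _ _).trans (dotProduct_comm _ _)
  rw [← h2, inner_self_eq_norm_sq_to_K, h1]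
  norm_num

lemma eig_le_of_loewner {H : Matrix (Fin d) (Fin d) ℂ} (hH : H.IsHermitian) {c : ℝ}
    (h : (c • (1 : Matrix (Fin d) (Fin d) ℂ) - H).PosSemidef) (i : Fin d) :
    hH.eigenvalues i ≤ c := by
  have h0 := h.dotProduct_mulVec_nonneg ⇑(hH.eigenvectorBasis i)
  rw [Matrix.sub_mulVec, dotProduct_sub, Matrix.smul_mulVec, Matrix.one_mulVec,
    dotProduct_smul, eigvec_normalized, eig_quadratic] at h0
  rw [Complex.real_smul, mul_one, ← Complex.ofReal_sub] at h0
  have := Complex.zero_le_real.mp (by exact_mod_cast h0)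
  linarith

lemma loewner_of_eig_le {H : Matrix (Fin d) (Fin d) ℂ} (hH : H.IsHermitian) {c : ℝ}
    (h : ∀ i, hH.eigenvalues i ≤ c) :
    (c • (1 : Matrix (Fin d) (Fin d) ℂ) - H).PosSemidef := by
  have := cfc_le hH (f := fun x => x) (g := fun _ => c) h
  rwa [cfc_const, cfc_id] at this

lemma le_eig_of_loewner {H : Matrix (Fin d) (Fin d) ℂ} (hH : H.IsHermitian) {c : ℝ}
    (h : (H - c • (1 : Matrix (Fin d) (Fin d) ℂ)).PosSemidef) (i : Fin d) :
    c ≤ hH.eigenvalues i := by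
  have h0 := h.dotProduct_mulVec_nonneg ⇑(hH.eigenvectorBasis i)
  rw [Matrix.sub_mulVec, dotProduct_sub, Matrix.smul_mulVec, Matrix.one_mulVec,
    dotProduct_smul, eigvec_normalized, eig_quadratic] at h0
  rw [Complex.real_smul, mul_one, ← Complex.ofReal_sub] at h0
  have := Complex.zero_le_real.mp (by exact_mod_cast h0)
  linarith

lemma loewner_of_le_eig {H : Matrix (Fin d) (Fin d) ℂ} (hH : H.IsHermitian) {c : ℝ}
    (h : ∀ i, c ≤ hH.eigenvalues i) :
    (H - c • (1 : Matrix (Fin d) (Fin d) ℂ)).PosSemidef := by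
  have := cfc_le hH (f := fun _ => c) (g := fun x => x) h
  rwa [cfc_const, cfc_id] at this


variable {X B : Matrix (Fin d) (Fin d) ℂ}

lemma fcal_eq (hX : X.IsHermitian) (f : ℝ → ℝ) : fcal f X = hX.cfc f := dif_pos hX

lemma mpow_eq (hX : X.IsHermitian) (t : ℝ) : mpow X t = hX.cfc (fun x => x ^ t) :=
  dif_pos hX

lemma mlog_eq (hX : X.IsHermitian) : mlog X = hX.cfc Real.log := dif_pos hX

lemma mpow_herm (hX : X.IsHermitian) (t : ℝ) : (mpow X t).IsHermitian := by
  rw [mpow_eq hX]; exact cfc_herm hX _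

lemma mpow_posDef (hX : X.PosDef) (t : ℝ) : (mpow X t).PosDef := by
  rw [mpow_eq hX.1]
  exact cfc_posDef hX.1 fun i => Real.rpow_pos_of_pos (hX.eigenvalues_pos i) t

lemma mpow_mul_mpow (hX : X.PosDef) (s t : ℝ) :
    mpow X s * mpow X t = mpow X (s + t) := by
  rw [mpow_eq hX.1, mpow_eq hX.1, mpow_eq hX.1, cfc_mul]
  exact cfc_congr hX.1 fun i => (Real.rpow_add (hX.eigenvalues_pos i) s t).symm

lemma mpow_zero (hX : X.PosDef) : mpow X 0 = 1 := by
  rw [mpow_eq hX.1]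
  rw [show (fun x : ℝ => x ^ (0:ℝ)) = (fun _ : ℝ => (1:ℝ)) from funext fun x => Real.rpow_zero x]
  exact cfc_one hX.1

lemma mpow_one (hX : X.PosDef) : mpow X 1 = X := by
  rw [mpow_eq hX.1]
  rw [show (fun x : ℝ => x ^ (1:ℝ)) = (fun x : ℝ => x) from funext fun x => Real.rpow_one x]
  exact cfc_id hX.1

/-- the conjugated matrix appearing in `rdist` -/
lemma inner_posDef (hX : X.PosDef) (hB : B.PosDef) :
    (mpow X (-(1/2 : ℝ)) * B * mpow X (-(1/2 : ℝ))).PosDef := by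
  have hY := mpow_posDef hX (-(1/2 : ℝ))
  have hYh : (mpow X (-(1/2 : ℝ)))ᴴ = mpow X (-(1/2 : ℝ)) := (mpow_herm hX.1 _)
  have := posDef_conj (C := mpow X (-(1/2 : ℝ))) hB hY.isUnit
  rwa [hYh] at this

lemma sandwich (hX : X.PosDef) (hB : B.PosDef) {r : ℝ}
    (hr : hsNorm (mlog (mpow X (-(1/2 : ℝ)) * B * mpow X (-(1/2 : ℝ)))) ≤ r) :
    (X - Real.exp (-r) • B).PosSemidef ∧ (Real.exp r • B - X).PosSemidef := by
  set Y := mpow X (-(1/2 : ℝ)) with hYdef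
  set M := Y * B * Y with hMdef
  have hM : M.PosDef := inner_posDef hX hB
  have hMh := hM.1
  -- eigenvalue bounds for M
  have heig : ∀ i, Real.exp (-r) ≤ hMh.eigenvalues i ∧ hMh.eigenvalues i ≤ Real.exp r := by
    intro i
    have habs : |Real.log (hMh.eigenvalues i)| ≤ r := by
      have h1 := abs_le_hsNorm_cfc hMh Real.log i
      rw [← mlog_eq hMh] at h1
      exact h1.trans hr
    have hpos := hM.eigenvalues_pos i
    rw [abs_le] at habs
    constructor
    · have := Real.exp_le_exp.mpr habs.1
      rwa [Real.exp_log hpos] at this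
    · have := Real.exp_le_exp.mpr habs.2
      rwa [Real.exp_log hpos] at this
  have hup : (Real.exp r • (1 : Matrix (Fin d) (Fin d) ℂ) - M).PosSemidef :=
    loewner_of_eig_le hMh fun i => (heig i).2
  have hlo : (M - Real.exp (-r) • (1 : Matrix (Fin d) (Fin d) ℂ)).PosSemidef :=
    loewner_of_le_eig hMh fun i => (heig i).1
  -- conjugate by Z = X^{1/2}
  set Z := mpow X (1/2 : ℝ) with hZdef
  have hZh : Zᴴ = Z := mpow_herm hX.1 _
  have hZY : Z * Y = 1 := by
    rw [hZdef, hYdef, mpow_mul_mpow hX]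
    norm_num
    exact mpow_zero hX
  have hZZ : Z * Z = X := by
    rw [hZdef, mpow_mul_mpow hX]
    norm_num
    exact mpow_one hX
  have hZMZ : Z * M * Zᴴ = B := by
    rw [hZh, hMdef]
    calc Z * (Y * B * Y) * Z = (Z * Y) * B * (Y * Z) := by
          simp only [mul_assoc]
      _ = B := by
          have hYZ : Y * Z = 1 := by
            rw [hYdef, hZdef, mpow_mul_mpow hX]
            norm_num
            exact mpow_zero hX
          rw [hZY, hYZ, one_mul, mul_one]
  have hZcZ : ∀ c : ℝ, Z * (c • (1 : Matrix (Fin d) (Fin d) ℂ)) * Zᴴ = c • X := by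
    intro c
    rw [hZh, mul_smul_comm, smul_mul_assoc, mul_one, hZZ]
  constructor
  · -- X - exp(-r) • B psd, from  exp r • 1 - M psd
    have h1 := psd_conj_sub (C := Z) hup
    rw [hZMZ, hZcZ] at h1
    -- h1 : exp r • X - B psd ; multiply by exp (-r)
    have h2 := psd_smul h1 (le_of_lt (Real.exp_pos (-r)))
    rw [smul_sub, smul_smul, ← Real.exp_add] at h2
    norm_num at h2
    convert h2 using 2
  · have h1 := psd_conj_sub (C := Z) hlo
    rw [hZMZ, hZcZ] at h1
    -- h1 : B - exp(-r) • X psd; multiply by exp r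
    have h2 := psd_smul h1 (le_of_lt (Real.exp_pos r))
    rw [smul_sub, smul_smul, ← Real.exp_add] at h2
    norm_num at h2
    convert h2 using 2


lemma hsNorm_neg (P : Matrix (Fin d) (Fin d) ℂ) : hsNorm (-P) = hsNorm P := by
  have h : emb (-P) = -emb P := rfl
  rw [← norm_emb, h, norm_neg, norm_emb]

lemma hsNorm_sub_le (P Q R : Matrix (Fin d) (Fin d) ℂ) :
    hsNorm (P - R) ≤ hsNorm (P - Q) + hsNorm (Q - R) := by
  have := hsNorm_add_le (P - Q) (Q - R)
  rwa [sub_add_sub_cancel] at this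

lemma hsNorm_cfc_le {g : ℝ → ℝ} {c : ℝ} (hc : 0 ≤ c)
    (h : ∀ i, |g (hA.eigenvalues i)| ≤ c) :
    hsNorm (hA.cfc g) ≤ Real.sqrt d * c := by
  rw [hsNorm_cfc]
  have hsum : ∑ i, g (hA.eigenvalues i) ^ 2 ≤ (d : ℝ) * c ^ 2 := by
    calc ∑ i, g (hA.eigenvalues i) ^ 2 ≤ ∑ _i : Fin d, c ^ 2 := by
          apply Finset.sum_le_sum
          intro i _
          rw [← sq_abs]
          exact pow_le_pow_left₀ (abs_nonneg _) (h i) 2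
      _ = (d : ℝ) * c ^ 2 := by simp [mul_comm]
  calc Real.sqrt (∑ i, g (hA.eigenvalues i) ^ 2) ≤ Real.sqrt ((d : ℝ) * c ^ 2) :=
        Real.sqrt_le_sqrt hsum
    _ = Real.sqrt d * c := by
        rw [Real.sqrt_mul (Nat.cast_nonneg d), Real.sqrt_sq hc]

lemma cfc_npow (n : ℕ) : hA.cfc (fun x => x ^ n) = A ^ n := by
  induction n with
  | zero => simpa using cfc_one hA
  | succ n ih =>
      have : (fun x : ℝ => x ^ (n + 1)) = fun x => x ^ n * x := by
        funext x; ring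
      rw [this, ← cfc_mul, ih, cfc_id, pow_succ]

lemma cfc_aeval (p : Polynomial ℝ) :
    (Polynomial.aeval A p : Matrix (Fin d) (Fin d) ℂ) = hA.cfc (fun x => p.eval x) := by
  induction p using Polynomial.induction_on' with
  | add p q hp hq =>
      rw [map_add, hp, hq, cfc_add]
      exact cfc_congr hA fun i => by simp
  | monomial n c =>
      rw [Polynomial.aeval_monomial, ← cfc_npow hA n, ← Algebra.smul_def, cfc_smul]
      exact cfc_congr hA fun i => by simp [Polynomial.eval_monomial]

lemma continuous_apoly (p : Polynomial ℝ) :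
    Continuous fun M : Matrix (Fin d) (Fin d) ℂ => (Polynomial.aeval M p : Matrix (Fin d) (Fin d) ℂ) := by
  have : (fun M : Matrix (Fin d) (Fin d) ℂ => (Polynomial.aeval M p : Matrix (Fin d) (Fin d) ℂ))
      = fun M => ∑ i ∈ Finset.range (p.natDegree + 1), p.coeff i • M ^ i := by
    funext M
    rw [Polynomial.aeval_eq_sum_range]
  rw [this]
  apply continuous_finset_sum
  intro i _
  exact (continuous_pow (M := Matrix (Fin d) (Fin d) ℂ) i).const_smul (p.coeff i)

/-- Hermitian matrices with eigenvalues in `[a, b]`. -/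
def specIn {d : ℕ} (a b : ℝ) : Set (Matrix (Fin d) (Fin d) ℂ) :=
  {M | ∃ hM : M.IsHermitian, ∀ i, hM.eigenvalues i ∈ Set.Icc a b}

lemma contOn_fcal {a b : ℝ} {f : ℝ → ℝ} (hf : ContinuousOn f (Set.Icc a b)) :
    ContinuousOn (fcal f) (specIn (d := d) a b) := by
  intro M₀ hM₀
  obtain ⟨h₀, heig₀⟩ := hM₀
  rw [ContinuousWithinAt, tendsto_iff_emb, Metric.tendsto_nhds]
  intro ε hε
  have hsd : (0:ℝ) < 2 * Real.sqrt d + 2 := by positivity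
  set ε' := ε / (2 * Real.sqrt d + 2) with hε'def
  have hε' : 0 < ε' := div_pos hε hsd
  obtain ⟨p, hp⟩ := exists_polynomial_near_of_continuousOn a b f hf ε' hε'
  -- pointwise polynomial approximation bound on cfc
  have happrox : ∀ (M : Matrix (Fin d) (Fin d) ℂ), M ∈ specIn (d := d) a b →
      hsNorm (fcal f M - (Polynomial.aeval M p : Matrix (Fin d) (Fin d) ℂ))
        ≤ Real.sqrt d * ε' := by
    intro M hM
    obtain ⟨hMh, heig⟩ := hM
    rw [fcal_eq hMh, cfc_aeval hMh, cfc_sub hMh]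
    apply hsNorm_cfc_le hMh (le_of_lt hε')
    intro i
    have := hp (hMh.eigenvalues i) (heig i)
    rw [abs_sub_comm] at this
    exact le_of_lt this
  have hcont : ∀ᶠ M in nhds M₀,
      hsNorm ((Polynomial.aeval M p : Matrix (Fin d) (Fin d) ℂ) - Polynomial.aeval M₀ p) < ε' := by
    have h1 : Filter.Tendsto (fun M : Matrix (Fin d) (Fin d) ℂ =>
        (Polynomial.aeval M p : Matrix (Fin d) (Fin d) ℂ)) (nhds M₀)
        (nhds (Polynomial.aeval M₀ p)) := (continuous_apoly p).tendsto M₀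
    rw [tendsto_iff_emb, Metric.tendsto_nhds] at h1
    have h2 := h1 ε' hε'
    apply h2.mono
    intro M hM
    rwa [Function.comp, dist_emb] at hM
  have hcont' := Filter.Eventually.filter_mono (nhdsWithin_le_nhds (s := specIn (d := d) a b)) hcont
  filter_upwards [hcont', self_mem_nhdsWithin] with M hM1 hM2
  rw [Function.comp, dist_emb]
  have htri := hsNorm_sub_le (fcal f M) (Polynomial.aeval M p) (fcal f M₀)
  have htri2 := hsNorm_sub_le (Polynomial.aeval M p : Matrix (Fin d) (Fin d) ℂ)
    (Polynomial.aeval M₀ p) (fcal f M₀)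
  have t1 := happrox M hM2
  have t3' := happrox M₀ ⟨h₀, heig₀⟩
  have t3 : hsNorm ((Polynomial.aeval M₀ p : Matrix (Fin d) (Fin d) ℂ) - fcal f M₀)
      ≤ Real.sqrt d * ε' := by
    have : (Polynomial.aeval M₀ p : Matrix (Fin d) (Fin d) ℂ) - fcal f M₀
        = -(fcal f M₀ - Polynomial.aeval M₀ p) :=
      (neg_sub (fcal f M₀) (Polynomial.aeval M₀ p : Matrix (Fin d) (Fin d) ℂ)).symm
    rw [this, hsNorm_neg]
    exact t3'
  have hsum : hsNorm (fcal f M - fcal f M₀)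
      ≤ Real.sqrt d * ε' + (ε' + Real.sqrt d * ε') := by
    calc hsNorm (fcal f M - fcal f M₀)
        ≤ hsNorm (fcal f M - Polynomial.aeval M p)
          + hsNorm ((Polynomial.aeval M p : Matrix (Fin d) (Fin d) ℂ) - fcal f M₀) := htri
      _ ≤ Real.sqrt d * ε' + (ε' + Real.sqrt d * ε') := by
          apply add_le_add t1
          calc hsNorm ((Polynomial.aeval M p : Matrix (Fin d) (Fin d) ℂ) - fcal f M₀)
              ≤ hsNorm ((Polynomial.aeval M p : Matrix (Fin d) (Fin d) ℂ) - Polynomial.aeval M₀ p)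
                + hsNorm ((Polynomial.aeval M₀ p : Matrix (Fin d) (Fin d) ℂ) - fcal f M₀) := htri2
            _ ≤ ε' + Real.sqrt d * ε' := add_le_add (le_of_lt hM1) t3
  have hfin : Real.sqrt d * ε' + (ε' + Real.sqrt d * ε') < ε := by
    have h1 : Real.sqrt d * ε' + (ε' + Real.sqrt d * ε') = (2 * Real.sqrt d + 1) * ε' := by ring
    have h2 : (2 * Real.sqrt d + 1) * ε' < (2 * Real.sqrt d + 2) * ε' := by
      apply mul_lt_mul_of_pos_right _ hε'
      linarith
    have h3 : (2 * Real.sqrt d + 2) * ε' = ε := by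
      rw [hε'def, mul_div_cancel₀ _ (ne_of_gt hsd)]
    rw [h1]
    linarith
  exact lt_of_le_of_lt hsum hfin


lemma psd_diag {M : Matrix (Fin d) (Fin d) ℂ} (hM : M.PosSemidef) (i : Fin d) :
    0 ≤ (M i i).re := by
  have h := hM.re_dotProduct_nonneg (Pi.single i 1 : Fin d → ℂ)
  have hdot : dotProduct (star (Pi.single i 1 : Fin d → ℂ))
      (M *ᵥ (Pi.single i 1 : Fin d → ℂ)) = M i i := by
    have hs : star (Pi.single i 1 : Fin d → ℂ) = (Pi.single i 1 : Fin d → ℂ) := by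
      funext p
      by_cases hp : p = i <;> simp [hp, Pi.single_apply]
    rw [hs, single_dotProduct, Matrix.mulVec_single]
    simp
  rwa [hdot] at h

lemma psd_trace_re_nonneg {M : Matrix (Fin d) (Fin d) ℂ} (hM : M.PosSemidef) :
    0 ≤ (Matrix.trace M).re := by
  rw [Matrix.trace, Complex.re_sum]
  exact Finset.sum_nonneg fun i _ => psd_diag hM i

lemma trace_re_mono {P Q : Matrix (Fin d) (Fin d) ℂ} (h : (Q - P).PosSemidef) :
    (Matrix.trace P).re ≤ (Matrix.trace Q).re := by
  have := psd_trace_re_nonneg h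
  rw [Matrix.trace_sub, Complex.sub_re] at this
  linarith

lemma hsNorm_psd_le_trace {M : Matrix (Fin d) (Fin d) ℂ} (hM : M.PosSemidef) :
    hsNorm M ≤ (Matrix.trace M).re := by
  have hMh := hM.1
  have hid : M = hMh.cfc (fun x => x) := (cfc_id hMh).symm
  have h1 : hsNorm M = Real.sqrt (∑ i, hMh.eigenvalues i ^ 2) := by
    conv_lhs => rw [hid]
    exact hsNorm_cfc hMh _
  have h2 : (Matrix.trace M).re = ∑ i, hMh.eigenvalues i := by
    conv_lhs => rw [hid]
    rw [trace_cfc, Complex.re_sum]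
    simp
  rw [h1, h2]
  have hnn : ∀ i ∈ Finset.univ, 0 ≤ hMh.eigenvalues i := fun i _ => hM.eigenvalues_nonneg i
  calc Real.sqrt (∑ i, hMh.eigenvalues i ^ 2)
      ≤ Real.sqrt ((∑ i, hMh.eigenvalues i) ^ 2) :=
        Real.sqrt_le_sqrt (Finset.sum_sq_le_sq_sum_of_nonneg hnn)
    _ = ∑ i, hMh.eigenvalues i := Real.sqrt_sq (Finset.sum_nonneg hnn)

lemma isClosed_psd : IsClosed {M : Matrix (Fin d) (Fin d) ℂ | M.PosSemidef} := by
  have hset : {M : Matrix (Fin d) (Fin d) ℂ | M.PosSemidef}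
      = {M : Matrix (Fin d) (Fin d) ℂ | Mᴴ = M}
        ∩ ⋂ x : Fin d → ℂ, {M | 0 ≤ dotProduct (star x) (M *ᵥ x)} := by
    ext M
    constructor
    · intro hM
      exact ⟨hM.1, Set.mem_iInter.mpr fun x => hM.dotProduct_mulVec_nonneg x⟩
    · intro ⟨h1, h2⟩
      exact .of_dotProduct_mulVec_nonneg h1 fun x => Set.mem_iInter.mp h2 x
  rw [hset]
  apply IsClosed.inter
  · exact isClosed_eq continuous_id.matrix_conjTranspose continuous_id
  · apply isClosed_iInter
    intro x
    have hcont : Continuous fun M : Matrix (Fin d) (Fin d) ℂ =>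
        dotProduct (star x) (M *ᵥ x) :=
      continuous_const.dotProduct (continuous_id.matrix_mulVec continuous_const)
    have hcl : IsClosed {z : ℂ | 0 ≤ z} := by
      have : {z : ℂ | 0 ≤ z} = {z : ℂ | 0 ≤ z.re} ∩ {z : ℂ | z.im = 0} := by
        ext z
        simp [Complex.le_def, eq_comm]
      rw [this]
      exact (isClosed_le continuous_const Complex.continuous_re).inter
        (isClosed_eq Complex.continuous_im continuous_const)
    exact hcl.preimage hcont


lemma isCompact_of_bounded_closed {K : Set (Matrix (Fin d) (Fin d) ℂ)} (hcl : IsClosed K)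
    {T : ℝ} (hb : ∀ X ∈ K, hsNorm X ≤ T) : IsCompact K := by
  have h1 : emb '' K = demb ⁻¹' K := by
    ext x
    constructor
    · rintro ⟨X, hX, rfl⟩
      simpa [demb_emb] using hX
    · intro hx
      exact ⟨demb x, hx, emb_demb x⟩
  have h2 : IsCompact (emb '' K) := by
    apply IsCompact.of_isClosed_subset
      (isCompact_closedBall (0 : EuclideanSpace ℂ (Fin d × Fin d)) T)
    · rw [h1]
      exact hcl.preimage continuous_demb
    · rintro x ⟨X, hX, rfl⟩
      rw [Metric.mem_closedBall, dist_zero_right, norm_emb]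
      exact hb X hX
  have h3 : K = demb '' (emb '' K) := by
    rw [Set.image_image]
    have : (fun X : Matrix (Fin d) (Fin d) ℂ => demb (emb X)) = id := funext demb_emb
    rw [this, Set.image_id]
  rw [h3]
  exact h2.image continuous_demb

lemma posDef_lower {B : Matrix (Fin d) (Fin d) ℂ} (hB : B.PosDef) (hd : 0 < d) :
    ∃ b : ℝ, 0 < b ∧ (B - b • (1 : Matrix (Fin d) (Fin d) ℂ)).PosSemidef := by
  have : Nonempty (Fin d) := ⟨⟨0, hd⟩⟩
  set b := Finset.univ.inf' Finset.univ_nonempty hB.1.eigenvalues with hbdef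
  obtain ⟨i₀, _, hi₀⟩ := Finset.exists_mem_eq_inf' Finset.univ_nonempty hB.1.eigenvalues
  refine ⟨b, ?_, loewner_of_le_eig hB.1 fun i => Finset.inf'_le _ (Finset.mem_univ i)⟩
  rw [hbdef, hi₀]
  exact hB.eigenvalues_pos i₀

lemma herm_upper {H : Matrix (Fin d) (Fin d) ℂ} (hH : H.IsHermitian) :
    (hsNorm H • (1 : Matrix (Fin d) (Fin d) ℂ) - H).PosSemidef := by
  apply loewner_of_eig_le hH
  intro i
  have := abs_le_hsNorm_cfc hH (fun x => x) i
  rw [cfc_id hH] at this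
  exact (le_abs_self _).trans this

lemma smul_one_sub_helper (c b : ℝ) (P : Matrix (Fin d) (Fin d) ℂ) :
    c • P - (c * b) • (1 : Matrix (Fin d) (Fin d) ℂ)
      = c • (P - b • (1 : Matrix (Fin d) (Fin d) ℂ)) := by
  rw [smul_sub, smul_smul]

lemma sub_smul_one_helper (c b : ℝ) (P : Matrix (Fin d) (Fin d) ℂ) :
    (c * b) • (1 : Matrix (Fin d) (Fin d) ℂ) - c • P
      = c • (b • (1 : Matrix (Fin d) (Fin d) ℂ) - P) := by
  rw [smul_sub, smul_smul]

/-- membership of the conjugated matrix in a spectral window -/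
lemma conj_mem_specIn {X Ak : Matrix (Fin d) (Fin d) ℂ} (hX : X.PosDef) {α β : ℝ}
    (hα : 0 < α) (hXs : X ∈ specIn (d := d) α β)
    {a b : ℝ} (ha : 0 < a) (hb : 0 ≤ b)
    (hAk1 : (Ak - a • (1 : Matrix (Fin d) (Fin d) ℂ)).PosSemidef)
    (hAk2 : (b • (1 : Matrix (Fin d) (Fin d) ℂ) - Ak).PosSemidef) :
    (mpow X (-(1/2 : ℝ)) * Ak * mpow X (-(1/2 : ℝ))) ∈ specIn (d := d) (a/β) (b/α) := by
  obtain ⟨hXh, hXeig⟩ := hXs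
  set Y := mpow X (-(1/2 : ℝ)) with hYdef
  have hYh : Y.IsHermitian := mpow_herm hX.1 _
  have hYY : Y * Y = hX.1.cfc (fun x => x ^ (-1 : ℝ)) := by
    rw [hYdef, mpow_eq hX.1, cfc_mul]
    apply cfc_congr
    intro i
    rw [← Real.rpow_add (hX.eigenvalues_pos i)]
    norm_num
  have hXeig' : ∀ i, α ≤ hX.1.eigenvalues i ∧ hX.1.eigenvalues i ≤ β := fun i => hXeig i
  -- bounds for Y * Y
  have hYY_up : ((1/α) • (1 : Matrix (Fin d) (Fin d) ℂ) - Y * Y).PosSemidef := by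
    rw [hYY, ← cfc_const hX.1 (1/α)]
    apply cfc_le hX.1
    intro i
    rw [Real.rpow_neg_one]
    rw [one_div]
    exact inv_anti₀ hα (hXeig' i).1
  have hYY_lo : (Y * Y - (1/β) • (1 : Matrix (Fin d) (Fin d) ℂ)).PosSemidef := by
    rw [hYY, ← cfc_const hX.1 (1/β)]
    apply cfc_le hX.1
    intro i
    rw [Real.rpow_neg_one]
    have hpos := hX.eigenvalues_pos i
    have := one_div_le_one_div_of_le hpos (hXeig' i).2
    rwa [one_div (hX.1.eigenvalues i)] at this
  -- conjugation bounds
  have hconj_lo : (Y * Ak * Y - a • (Y * Y)).PosSemidef := by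
    have := psd_conj_sub (C := Y) hAk1
    rw [hYh.eq] at this
    -- this : Y * Ak * Y - Y * (a • 1) * Y psd
    have heq : Y * (a • (1 : Matrix (Fin d) (Fin d) ℂ)) * Y = a • (Y * Y) := by
      rw [mul_smul_comm, smul_mul_assoc, mul_one]
    rwa [heq] at this
  have hconj_up : (b • (Y * Y) - Y * Ak * Y).PosSemidef := by
    have := psd_conj_sub (C := Y) hAk2
    rw [hYh.eq] at this
    have heq : Y * (b • (1 : Matrix (Fin d) (Fin d) ℂ)) * Y = b • (Y * Y) := by
      rw [mul_smul_comm, smul_mul_assoc, mul_one]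
    rwa [heq] at this
  -- combine
  have hMlo : (Y * Ak * Y - (a/β) • (1 : Matrix (Fin d) (Fin d) ℂ)).PosSemidef := by
    apply psd_trans _ hconj_lo
    have h1 := psd_smul hYY_lo (le_of_lt ha)
    rw [smul_sub, smul_smul] at h1
    rwa [show a * (1/β) = a/β by ring] at h1
  have hMup : ((b/α) • (1 : Matrix (Fin d) (Fin d) ℂ) - Y * Ak * Y).PosSemidef := by
    apply psd_trans hconj_up
    have h1 := psd_smul hYY_up hb
    rw [smul_sub, smul_smul] at h1
    rwa [show b * (1/α) = b/α by ring] at h1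
  have hMh : (Y * Ak * Y).IsHermitian := by
    have hAkh : Ak.IsHermitian := by
      have h2 := hAk1.1
      have h3 : (Ak - a • (1 : Matrix (Fin d) (Fin d) ℂ)) + a • (1 : Matrix (Fin d) (Fin d) ℂ)
          = Ak := sub_add_cancel Ak _
      rw [← h3]
      apply h2.add
      show (a • (1 : Matrix (Fin d) (Fin d) ℂ))ᴴ = _
      rw [show a • (1 : Matrix (Fin d) (Fin d) ℂ) = (a:ℂ) • 1 from (coe_smul_matrix a 1).symm,
        Matrix.conjTranspose_smul, Complex.star_def, Complex.conj_ofReal, Matrix.conjTranspose_one]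
    show (Y * Ak * Y)ᴴ = Y * Ak * Y
    rw [Matrix.conjTranspose_mul, Matrix.conjTranspose_mul, hYh.eq, hAkh.eq, mul_assoc]
  exact ⟨hMh, fun i => ⟨le_eig_of_loewner hMh hMlo i, eig_le_of_loewner hMh hMup i⟩⟩


lemma contOn_rdist {α β : ℝ} (hα : 0 < α) (hβ : 0 < β) {Ak : Matrix (Fin d) (Fin d) ℂ}
    {a b : ℝ} (ha : 0 < a) (hb : 0 ≤ b)
    (hAk1 : (Ak - a • (1 : Matrix (Fin d) (Fin d) ℂ)).PosSemidef)
    (hAk2 : (b • (1 : Matrix (Fin d) (Fin d) ℂ) - Ak).PosSemidef)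
    {K : Set (Matrix (Fin d) (Fin d) ℂ)} (hK : ∀ X ∈ K, X.PosDef ∧ X ∈ specIn (d := d) α β) :
    ContinuousOn (fun X => rdist X Ak) K := by
  have h1 : ContinuousOn (fun X : Matrix (Fin d) (Fin d) ℂ => mpow X (-(1/2 : ℝ))) K := by
    have hf : ContinuousOn (fun x : ℝ => x ^ (-(1/2 : ℝ))) (Set.Icc α β) := by
      intro x hx
      exact (Real.continuousAt_rpow_const x _
        (Or.inl (ne_of_gt (lt_of_lt_of_le hα hx.1)))).continuousWithinAt
    have := (contOn_fcal hf).mono (fun X hX => (hK X hX).2)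
    exact this
  have h2 : Continuous (fun Y : Matrix (Fin d) (Fin d) ℂ => Y * Ak * Y) :=
    (continuous_id.matrix_mul continuous_const).matrix_mul continuous_id
  have h3 : ContinuousOn (mlog (d := d)) (specIn (d := d) (a/β) (b/α)) := by
    have hf : ContinuousOn Real.log (Set.Icc (a/β) (b/α)) := by
      apply Real.continuousOn_log.mono
      intro x hx
      have : 0 < x := lt_of_lt_of_le (div_pos ha hβ) hx.1
      simp [ne_of_gt this]
    exact contOn_fcal hf
  have hmaps : ∀ X ∈ K, mpow X (-(1/2 : ℝ)) * Ak * mpow X (-(1/2 : ℝ))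
      ∈ specIn (d := d) (a/β) (b/α) := by
    intro X hX
    exact conj_mem_specIn (hK X hX).1 hα (hK X hX).2 ha hb hAk1 hAk2
  have hcomp : ContinuousOn
      (fun X : Matrix (Fin d) (Fin d) ℂ =>
        mlog (mpow X (-(1/2 : ℝ)) * Ak * mpow X (-(1/2 : ℝ)))) K := by
    apply h3.comp ((h2.comp_continuousOn h1))
    exact hmaps
  exact continuous_hsNorm.comp_continuousOn hcomp


end MyCfc

open MyCfc in
/-- F₁(·; 𝔸) attains its infimum on ℙ_d. -/
theorem stmt0 {d n : ℕ} (hn : 0 < n) (A : Fin n → Matrix (Fin d) (Fin d) ℂ)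
    (hA : ∀ k, (A k).PosDef) :
    ∃ M : Matrix (Fin d) (Fin d) ℂ, M.PosDef ∧
      ∀ X : Matrix (Fin d) (Fin d) ℂ, X.PosDef → Fobj 1 A M ≤ Fobj 1 A X := by
  classical
  by_cases hd : d = 0
  · subst hd
    refine ⟨1, Matrix.PosDef.one, ?_⟩
    intro X hX
    have h1 : (1 : Matrix (Fin 0) (Fin 0) ℂ) = X := Subsingleton.elim _ _
    rw [h1]
  · have hd' : 0 < d := Nat.pos_of_ne_zero hd
    have hn' : (0:ℝ) < (n:ℝ) := by exact_mod_cast hn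
    set k0 : Fin n := ⟨0, hn⟩ with hk0
    set B := A k0 with hBdef
    have hB : B.PosDef := hA k0
    have hFobj : ∀ X, Fobj 1 A X = (1/(n:ℝ)) * ∑ k, rdist X (A k) := by
      intro X
      unfold Fobj
      simp [Real.rpow_one]
    have hrd_nonneg : ∀ (P Q : Matrix (Fin d) (Fin d) ℂ), 0 ≤ rdist P Q :=
      fun P Q => Real.sqrt_nonneg _
    have hFB_nonneg : 0 ≤ Fobj 1 A B := by
      rw [hFobj]
      apply mul_nonneg (by positivity)
      exact Finset.sum_nonneg fun k _ => hrd_nonneg _ _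
    set R := (n:ℝ) * Fobj 1 A B with hRdef
    have hR0 : 0 ≤ R := mul_nonneg (le_of_lt hn') hFB_nonneg
    set c : ℝ := Real.exp (-R) with hcdef
    set C : ℝ := Real.exp R with hCdef
    have hcpos : 0 < c := Real.exp_pos _
    have hCpos : 0 < C := Real.exp_pos _
    have hc1 : c ≤ 1 := Real.exp_le_one_iff.mpr (neg_nonpos.mpr hR0)
    have hC1 : 1 ≤ C := Real.one_le_exp hR0
    set K := {X : Matrix (Fin d) (Fin d) ℂ |
      (X - c • B).PosSemidef ∧ (C • B - X).PosSemidef} with hKdef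
    have hBK : B ∈ K := by
      constructor
      · have : B - c • B = (1 - c) • B := by rw [sub_smul, one_smul]
        rw [this]
        exact psd_smul hB.posSemidef (by linarith)
      · have : C • B - B = (C - 1) • B := by rw [sub_smul, one_smul]
        rw [this]
        exact psd_smul hB.posSemidef (by linarith)
    obtain ⟨b₁, hb₁pos, hb₁⟩ := posDef_lower hB hd'
    have hb₂ := herm_upper hB.1
    set α : ℝ := c * b₁ with hαdef
    set β : ℝ := C * hsNorm B with hβdef
    have hα : 0 < α := mul_pos hcpos hb₁pos
    have hhsB : 0 < hsNorm B := by
      have h1 := eig_le_of_loewner hB.1 hb₂ ⟨0, hd'⟩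
      have h2 := hB.eigenvalues_pos ⟨0, hd'⟩
      linarith
    have hβ : 0 < β := mul_pos hCpos hhsB
    have hKspec : ∀ X ∈ K, X.PosDef ∧ X ∈ specIn (d := d) α β := by
      intro X hX
      obtain ⟨h1, h2⟩ := hX
      have hXpd : X.PosDef := by
        have h3 := (posDef_smul hB hcpos).add_posSemidef h1
        have h4 : c • B + (X - c • B) = X := by abel
        rwa [h4] at h3
      have hXlow : (X - α • (1 : Matrix (Fin d) (Fin d) ℂ)).PosSemidef := by
        apply psd_trans _ h1
        rw [hαdef, smul_one_sub_helper]
        exact psd_smul hb₁ (le_of_lt hcpos)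
      have hXup : ((β • (1 : Matrix (Fin d) (Fin d) ℂ)) - X).PosSemidef := by
        apply psd_trans h2
        rw [hβdef, sub_smul_one_helper]
        exact psd_smul hb₂ (le_of_lt hCpos)
      exact ⟨hXpd, hXpd.1,
        fun i => ⟨le_eig_of_loewner hXpd.1 hXlow i, eig_le_of_loewner hXpd.1 hXup i⟩⟩
    have hKcl : IsClosed K := by
      have h1 : IsClosed {X : Matrix (Fin d) (Fin d) ℂ | (X - c • B).PosSemidef} :=
        isClosed_psd.preimage (continuous_id.sub continuous_const)
      have h2 : IsClosed {X : Matrix (Fin d) (Fin d) ℂ | (C • B - X).PosSemidef} :=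
        isClosed_psd.preimage (continuous_const.sub continuous_id)
      exact h1.inter h2
    have hKbd : ∀ X ∈ K, hsNorm X ≤ (Matrix.trace (C • B)).re := by
      intro X hX
      exact (hsNorm_psd_le_trace (hKspec X hX).1.posSemidef).trans (trace_re_mono hX.2)
    have hKcpt : IsCompact K := isCompact_of_bounded_closed hKcl hKbd
    have hcont : ContinuousOn (Fobj 1 A) K := by
      have hck : ∀ k : Fin n, ContinuousOn (fun X => rdist X (A k)) K := by
        intro k
        obtain ⟨ak, hakpos, hak1⟩ := posDef_lower (hA k) hd'
        have hak2 := herm_upper (hA k).1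
        exact contOn_rdist hα hβ hakpos (hsNorm_nonneg (A k)) hak1 hak2 hKspec
      have hrw : (Fobj 1 A : Matrix (Fin d) (Fin d) ℂ → ℝ)
          = fun X => (1/(n:ℝ)) * ∑ k, rdist X (A k) := funext hFobj
      rw [hrw]
      exact continuousOn_const.mul (continuousOn_finset_sum _ fun k _ => hck k)
    obtain ⟨M, hMK, hMmin⟩ := hKcpt.exists_isMinOn ⟨B, hBK⟩ hcont
    refine ⟨M, (hKspec M hMK).1, ?_⟩
    intro X hXpd
    by_cases hXK : X ∈ K
    · exact hMmin hXK
    · have hrd : R < rdist X B := by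
        by_contra hle
        push_neg at hle
        exact hXK (sandwich hXpd hB hle)
      have hFX : Fobj 1 A B ≤ Fobj 1 A X := by
        have hsum : rdist X B ≤ ∑ k, rdist X (A k) := by
          have := Finset.single_le_sum (f := fun k => rdist X (A k))
            (fun k _ => hrd_nonneg _ _) (Finset.mem_univ k0)
          simpa [← hBdef] using this
        have hRle : R ≤ ∑ k, rdist X (A k) := le_trans (le_of_lt hrd) hsum
        rw [hRdef] at hRle
        have hX' : (n:ℝ) * Fobj 1 A X = ∑ k, rdist X (A k) := by
          rw [hFobj X]
          field_simp
        have h5 : (n:ℝ) * Fobj 1 A B ≤ (n:ℝ) * Fobj 1 A X := by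
          rw [hX']
          exact hRle
        exact le_of_mul_le_mul_left h5 hn'
      exact le_trans (hMmin hBK) hFX
end
end

section
/- Let A, B ∈ ℙ_d with A ≠ B and set D := δ(A, B). Then for all s, t ∈ [0, D], δ(A #_{s/D} B, A #_{t/D} B) = |s − t|; i.e., the curve γ(t) = A #_{t/D} B, t ∈ [0, D], is a unit-speed geodesic from A to B in the metric space (ℙ_d, δ). -/
noncomputable section

open Matrix
open scoped ComplexOrder

namespace GeoAux

open Polynomial Finset

variable {d : ℕ}

lemma fcal_herm {M : Matrix (Fin d) (Fin d) ℂ} (hM : M.IsHermitian) (f : ℝ → ℝ) :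
    fcal f M = hM.cfc f := dif_pos hM

lemma star_mul_self_eigen {M : Matrix (Fin d) (Fin d) ℂ} (hM : M.IsHermitian) :
    star (hM.eigenvectorUnitary : Matrix (Fin d) (Fin d) ℂ) *
      (hM.eigenvectorUnitary : Matrix (Fin d) (Fin d) ℂ) = 1 :=
  (Matrix.mem_unitaryGroup_iff').mp (hM.eigenvectorUnitary).2

lemma mul_star_self_eigen {M : Matrix (Fin d) (Fin d) ℂ} (hM : M.IsHermitian) :
    (hM.eigenvectorUnitary : Matrix (Fin d) (Fin d) ℂ) *
      star (hM.eigenvectorUnitary : Matrix (Fin d) (Fin d) ℂ) = 1 :=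
  (Matrix.mem_unitaryGroup_iff).mp (hM.eigenvectorUnitary).2

lemma conj_mul_conj (U P Q : Matrix (Fin d) (Fin d) ℂ) (h : star U * U = 1) :
    (U * P * star U) * (U * Q * star U) = U * (P * Q) * star U := by
  have hcollapse : ∀ x : Matrix (Fin d) (Fin d) ℂ, star U * (U * x) = x := fun x => by
    rw [← mul_assoc, h, one_mul]
  simp only [mul_assoc, hcollapse]

lemma cfc_mul {M : Matrix (Fin d) (Fin d) ℂ} (hM : M.IsHermitian) (f g : ℝ → ℝ) :
    hM.cfc f * hM.cfc g = hM.cfc fun x => f x * g x := by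
  simp only [Matrix.IsHermitian.cfc, Unitary.conjStarAlgAut_apply]
  rw [conj_mul_conj _ _ _ (star_mul_self_eigen hM), diagonal_mul_diagonal]
  have : (fun i => (RCLike.ofReal ∘ f ∘ hM.eigenvalues) i *
      (RCLike.ofReal ∘ g ∘ hM.eigenvalues) i)
      = (RCLike.ofReal ∘ (fun x => f x * g x) ∘ hM.eigenvalues : Fin d → ℂ) := by
    funext i
    simp
  rw [this]

lemma cfc_one {M : Matrix (Fin d) (Fin d) ℂ} (hM : M.IsHermitian) :
    hM.cfc (fun _ => 1) = 1 := by
  rw [Matrix.IsHermitian.cfc]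
  have : diagonal (RCLike.ofReal ∘ (fun _ => (1:ℝ)) ∘ hM.eigenvalues)
      = (1 : Matrix (Fin d) (Fin d) ℂ) := by
    rw [← diagonal_one]
    congr 1
  rw [Unitary.conjStarAlgAut_apply, this, mul_one, mul_star_self_eigen hM]

lemma cfc_id {M : Matrix (Fin d) (Fin d) ℂ} (hM : M.IsHermitian) :
    hM.cfc (fun x => x) = M := by
  rw [Matrix.IsHermitian.cfc]
  exact hM.spectral_theorem.symm

lemma cfc_congr {M : Matrix (Fin d) (Fin d) ℂ} (hM : M.IsHermitian) {f g : ℝ → ℝ}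
    (h : ∀ i, f (hM.eigenvalues i) = g (hM.eigenvalues i)) : hM.cfc f = hM.cfc g := by
  have hfg : (RCLike.ofReal ∘ f ∘ hM.eigenvalues : Fin d → ℂ)
      = RCLike.ofReal ∘ g ∘ hM.eigenvalues := by
    funext i
    simp [Function.comp, h i]
  rw [Matrix.IsHermitian.cfc, Matrix.IsHermitian.cfc, hfg]

lemma posDef_conj {M P : Matrix (Fin d) (Fin d) ℂ} (hM : M.PosDef) (hP : IsUnit P) :
    (Pᴴ * M * P).PosDef := by
  refine posDef_iff_dotProduct_mulVec.mpr ⟨?_, fun x hx => ?_⟩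
  · have h := hM.isHermitian
    simp only [Matrix.IsHermitian, conjTranspose_mul, conjTranspose_conjTranspose, h.eq,
      mul_assoc]
  · have hinj : Function.Injective (P.mulVec) := Matrix.mulVec_injective_iff_isUnit.mpr hP
    have hPx : P *ᵥ x ≠ 0 := fun h => hx (hinj (by simpa using h))
    have := hM.dotProduct_mulVec_pos hPx
    convert this using 1
    rw [← mulVec_mulVec, ← mulVec_mulVec, dotProduct_mulVec, ← star_mulVec]

lemma cfc_posDef {M : Matrix (Fin d) (Fin d) ℂ} (hM : M.IsHermitian) (f : ℝ → ℝ)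
    (h : ∀ i, 0 < f (hM.eigenvalues i)) : (hM.cfc f).PosDef := by
  rw [Matrix.IsHermitian.cfc]
  have hdiag : (diagonal (RCLike.ofReal ∘ f ∘ hM.eigenvalues) :
      Matrix (Fin d) (Fin d) ℂ).PosDef := by
    rw [Matrix.posDef_diagonal_iff]
    intro i
    simpa using h i
  have hU : IsUnit (star (hM.eigenvectorUnitary : Matrix (Fin d) (Fin d) ℂ)) :=
    ⟨⟨star (hM.eigenvectorUnitary : Matrix (Fin d) (Fin d) ℂ),
      (hM.eigenvectorUnitary : Matrix (Fin d) (Fin d) ℂ),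
      star_mul_self_eigen hM, mul_star_self_eigen hM⟩, rfl⟩
  have := posDef_conj hdiag hU
  rwa [star_eq_conjTranspose, conjTranspose_conjTranspose] at this

lemma sum_sq_eq_trace (M : Matrix (Fin d) (Fin d) ℂ) :
    ∑ i, ∑ j, ‖M i j‖ ^ 2 = (Matrix.trace (Mᴴ * M)).re := by
  rw [Matrix.trace]
  rw [Complex.re_sum]
  rw [Finset.sum_comm]
  refine Finset.sum_congr rfl fun j _ => ?_
  rw [Matrix.diag_apply, Matrix.mul_apply, Complex.re_sum]
  refine Finset.sum_congr rfl fun i _ => ?_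
  rw [Matrix.conjTranspose_apply, Complex.star_def, mul_comm, Complex.mul_conj,
    Complex.ofReal_re, Complex.normSq_eq_norm_sq]

lemma hsNorm_conj {U M : Matrix (Fin d) (Fin d) ℂ}
    (h1 : star U * U = 1) (h2 : U * star U = 1) :
    hsNorm (U * M * star U) = hsNorm M := by
  rw [hsNorm, hsNorm, sum_sq_eq_trace, sum_sq_eq_trace]
  have hcollapse : ∀ x : Matrix (Fin d) (Fin d) ℂ, star U * (U * x) = x := fun x => by
    rw [← mul_assoc, h1, one_mul]
  have : (U * M * star U)ᴴ * (U * M * star U) = U * (Mᴴ * M) * star U := by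
    rw [← star_eq_conjTranspose, ← star_eq_conjTranspose]
    have e1 : star (U * M * star U) = U * (star M * star U) := by
      simp only [StarMul.star_mul, star_star, mul_assoc]
    rw [e1]
    simp only [mul_assoc, hcollapse]
  rw [this, Matrix.trace_mul_cycle, ← mul_assoc, h1, one_mul]

lemma hsNorm_diagonal (v : Fin d → ℂ) :
    hsNorm (diagonal v) = Real.sqrt (∑ i, ‖v i‖ ^ 2) := by
  rw [hsNorm]
  congr 1
  refine Finset.sum_congr rfl fun i _ => ?_
  rw [Finset.sum_eq_single i]
  · rw [diagonal_apply_eq]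
  · intro j _ hji
    rw [diagonal_apply_ne' _ hji]
    simp
  · simp

lemma hsNorm_cfc {M : Matrix (Fin d) (Fin d) ℂ} (hM : M.IsHermitian) (f : ℝ → ℝ) :
    hsNorm (hM.cfc f) = Real.sqrt (∑ i, f (hM.eigenvalues i) ^ 2) := by
  rw [Matrix.IsHermitian.cfc, Unitary.conjStarAlgAut_apply,
    hsNorm_conj (star_mul_self_eigen hM) (mul_star_self_eigen hM), hsNorm_diagonal]
  congr 1
  refine Finset.sum_congr rfl fun i _ => ?_
  simp [Function.comp, Complex.norm_real, Real.norm_eq_abs, sq_abs]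

lemma charpoly_conj {P Q M : Matrix (Fin d) (Fin d) ℂ} (h1 : P * Q = 1) (h2 : Q * P = 1) :
    (P * M * Q).charpoly = M.charpoly := by
  have key : charmatrix (P * M * Q) =
      (C : ℂ →+* ℂ[X]).mapMatrix P * charmatrix M * (C : ℂ →+* ℂ[X]).mapMatrix Q := by
    rw [charmatrix, charmatrix, mul_sub, sub_mul]
    have hsc : (C : ℂ →+* ℂ[X]).mapMatrix P * Matrix.scalar (Fin d) (X : ℂ[X]) *
        (C : ℂ →+* ℂ[X]).mapMatrix Q = Matrix.scalar (Fin d) (X : ℂ[X]) := by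
      rw [mul_assoc,
        (Matrix.scalar_commute (X : ℂ[X]) (fun r => Commute.all _ _)
          ((C : ℂ →+* ℂ[X]).mapMatrix Q)).eq,
        ← mul_assoc, ← RingHom.map_mul _ P Q, h1, RingHom.map_one, one_mul]
    rw [hsc, ← RingHom.map_mul _ P M, ← RingHom.map_mul _ (P * M) Q]
  rw [Matrix.charpoly, key, det_mul, det_mul, Matrix.charpoly]
  have hswap : ((C : ℂ →+* ℂ[X]).mapMatrix P).det * (charmatrix M).det *
      ((C : ℂ →+* ℂ[X]).mapMatrix Q).det
      = (charmatrix M).det *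
        ((C : ℂ →+* ℂ[X]).mapMatrix P * (C : ℂ →+* ℂ[X]).mapMatrix Q).det := by
    rw [det_mul]; ring
  rw [hswap, ← RingHom.map_mul _ P Q, h1, RingHom.map_one, det_one, mul_one]

lemma charpoly_diagonal (v : Fin d → ℂ) :
    (diagonal v).charpoly = ∏ i, (X - C (v i)) := by
  have hd : charmatrix (diagonal v) = diagonal (fun i : Fin d => (X : ℂ[X]) - C (v i)) := by
    ext i j
    rcases eq_or_ne i j with rfl | hij
    · simp
    · rw [charmatrix_apply_ne _ _ _ hij, diagonal_apply_ne _ hij, diagonal_apply_ne _ hij,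
        map_zero, neg_zero]
  rw [Matrix.charpoly, hd, det_diagonal]

lemma charpoly_cfc {M : Matrix (Fin d) (Fin d) ℂ} (hM : M.IsHermitian) (f : ℝ → ℝ) :
    (hM.cfc f).charpoly =
      ((Finset.univ.val.map fun i => ((f (hM.eigenvalues i) : ℝ) : ℂ)).map
        fun a => X - C a).prod := by
  rw [Matrix.IsHermitian.cfc, Unitary.conjStarAlgAut_apply,
    charpoly_conj (mul_star_self_eigen hM) (star_mul_self_eigen hM),
    charpoly_diagonal, Finset.prod_eq_multiset_prod, Multiset.map_map]
  rfl

lemma eig_multiset_eq {M N : Matrix (Fin d) (Fin d) ℂ} (hM : M.IsHermitian)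
    (hN : N.IsHermitian) (f g : ℝ → ℝ)
    (h : (hM.cfc f).charpoly = (hN.cfc g).charpoly) :
    Finset.univ.val.map (fun i => ((f (hM.eigenvalues i) : ℝ) : ℂ))
      = Finset.univ.val.map (fun i => ((g (hN.eigenvalues i) : ℝ) : ℂ)) := by
  rw [charpoly_cfc hM f, charpoly_cfc hN g] at h
  have := congrArg Polynomial.roots h
  rwa [roots_multiset_prod_X_sub_C, roots_multiset_prod_X_sub_C] at this

lemma sum_transfer {M N : Matrix (Fin d) (Fin d) ℂ} (hM : M.IsHermitian)
    (hN : N.IsHermitian) (f g : ℝ → ℝ)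
    (h : (hM.cfc f).charpoly = (hN.cfc g).charpoly) (φ : ℝ → ℝ) :
    ∑ i, φ (f (hM.eigenvalues i)) = ∑ i, φ (g (hN.eigenvalues i)) := by
  have hms := eig_multiset_eq hM hN f g h
  have := congrArg (fun s : Multiset ℂ => (s.map fun z => φ z.re).sum) hms
  simp only [Multiset.map_map, Function.comp] at this
  rw [Finset.sum_eq_multiset_sum, Finset.sum_eq_multiset_sum]
  simpa using this

section mpow

variable {M : Matrix (Fin d) (Fin d) ℂ}

lemma mpow_eq (hM : M.IsHermitian) (t : ℝ) : mpow M t = hM.cfc fun x => x ^ t :=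
  fcal_herm hM _

lemma mlog_eq (hM : M.IsHermitian) : mlog M = hM.cfc Real.log :=
  fcal_herm hM _

lemma mpow_posDef (hM : M.PosDef) (t : ℝ) : (mpow M t).PosDef := by
  rw [mpow_eq hM.isHermitian]
  exact cfc_posDef _ _ fun i => Real.rpow_pos_of_pos (hM.eigenvalues_pos i) t

lemma mpow_add (hM : M.PosDef) (s t : ℝ) : mpow M s * mpow M t = mpow M (s + t) := by
  rw [mpow_eq hM.isHermitian, mpow_eq hM.isHermitian, mpow_eq hM.isHermitian,
    cfc_mul]
  exact cfc_congr hM.isHermitian fun i =>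
    (Real.rpow_add (hM.eigenvalues_pos i) s t).symm

lemma mpow_zero (hM : M.PosDef) : mpow M 0 = 1 := by
  rw [mpow_eq hM.isHermitian,
    cfc_congr hM.isHermitian (g := fun _ => 1) (fun i => Real.rpow_zero _),
    cfc_one]

lemma mpow_one (hM : M.PosDef) : mpow M 1 = M := by
  rw [mpow_eq hM.isHermitian,
    cfc_congr hM.isHermitian (g := fun x => x) (fun i => Real.rpow_one _),
    cfc_id]

end mpow

end GeoAux

open GeoAux Polynomial in
/-- t ↦ A #_{t/D} B is a unit-speed geodesic from A to B. -/
theorem stmt2 {d : ℕ} (A B : Matrix (Fin d) (Fin d) ℂ) (hA : A.PosDef) (hB : B.PosDef)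
    (hAB : A ≠ B) :
    ∀ s ∈ Set.Icc (0 : ℝ) (rdist A B), ∀ t ∈ Set.Icc (0 : ℝ) (rdist A B),
      rdist (gmean A B (s / rdist A B)) (gmean A B (t / rdist A B)) = |s - t| := by
  intro s _ t _
  set S := mpow A (1 / 2 : ℝ) with hSdef
  set Si := mpow A (-(1 / 2 : ℝ)) with hSidef
  have hS : S.PosDef := mpow_posDef hA _
  have hSi : Si.PosDef := mpow_posDef hA _
  have hSSi : S * Si = 1 := by
    rw [hSdef, hSidef, mpow_add hA]; norm_num; exact mpow_zero hA
  have hSiS : Si * S = 1 := by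
    rw [hSdef, hSidef, mpow_add hA]; norm_num; exact mpow_zero hA
  set C := Si * B * Si with hCdef
  have hC : C.PosDef := by
    have := posDef_conj hB hSi.isUnit
    rwa [hSi.isHermitian.eq] at this
  -- eigenvalues of C
  set ν := hC.isHermitian.eigenvalues with hν
  set L := ∑ i, Real.log (ν i) ^ 2 with hL
  have hL0 : 0 ≤ L := Finset.sum_nonneg fun i _ => sq_nonneg _
  have hD : rdist A B = Real.sqrt L := by
    rw [rdist, ← hSidef, ← hCdef, mlog_eq hC.isHermitian, hsNorm_cfc]
  have hDpos : 0 < rdist A B := by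
    rw [hD]
    rcases lt_or_eq_of_le (Real.sqrt_nonneg L) with h | h
    · exact h
    exfalso
    have hLz : L = 0 := (Real.sqrt_eq_zero hL0).mp h.symm
    have hν1 : ∀ i, ν i = 1 := by
      intro i
      have hterm : ∀ j ∈ Finset.univ, Real.log (ν j) ^ 2 = 0 :=
        (Finset.sum_eq_zero_iff_of_nonneg
          (fun j _ => sq_nonneg (Real.log (ν j)))).mp (hL ▸ hLz)
      have : Real.log (ν i) ^ 2 = 0 := hterm i (Finset.mem_univ i)
      have hlog : Real.log (ν i) = 0 := by
        exact pow_eq_zero_iff (by norm_num) |>.mp this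
      have := Real.exp_log (hC.eigenvalues_pos i)
      rw [hlog, Real.exp_zero] at this
      exact this.symm
    have hC1 : C = 1 := by
      rw [← cfc_id hC.isHermitian,
        cfc_congr hC.isHermitian (g := fun _ => 1) (fun i => hν1 i), cfc_one]
    have : B = A := by
      have h2 : S * C * S = S * 1 * S := by rw [hC1]
      rw [hCdef] at h2
      calc B = (S * Si) * B * (Si * S) := by rw [hSSi, hSiS, one_mul, mul_one]
        _ = S * (Si * B * Si) * S := by simp only [mul_assoc]
        _ = S * 1 * S := h2
        _ = mpow A 1 := by rw [mul_one, hSdef, mpow_add hA]; norm_num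
        _ = A := mpow_one hA
    exact hAB this.symm
  set D := rdist A B
  set s' := s / D with hs'
  set t' := t / D with ht'
  -- the two points on the curve
  have hgm : ∀ u : ℝ, gmean A B u = S * mpow C u * S := fun u => rfl
  have hgmpos : ∀ u : ℝ, (gmean A B u).PosDef := by
    intro u
    rw [hgm]
    have := posDef_conj (mpow_posDef hC u) hS.isUnit
    rwa [hS.isHermitian.eq] at this
  set X := gmean A B s' with hXdef
  set Y := gmean A B t' with hYdef
  have hX : X.PosDef := hgmpos s'
  have hY : Y.PosDef := hgmpos t'
  set Q := mpow X (-(1 / 2 : ℝ)) with hQdef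
  have hQ : Q.PosDef := mpow_posDef hX _
  set Z := Q * Y * Q with hZdef
  have hZ : Z.PosDef := by
    have := posDef_conj hY hQ.isUnit
    rwa [hQ.isHermitian.eq] at this
  have hrd : rdist X Y = Real.sqrt (∑ i, Real.log (hZ.isHermitian.eigenvalues i) ^ 2) := by
    rw [rdist, ← hQdef, ← hZdef, mlog_eq hZ.isHermitian, hsNorm_cfc]
  -- charpoly chain
  have hQQ' : Q * mpow X (1 / 2 : ℝ) = 1 := by
    rw [hQdef, mpow_add hX]; norm_num; exact mpow_zero hX
  have hQ'Q : mpow X (1 / 2 : ℝ) * Q = 1 := by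
    rw [hQdef, mpow_add hX]; norm_num; exact mpow_zero hX
  have step1 : Z.charpoly = (Y * Q * Q).charpoly := by
    have h := charpoly_conj (M := Y * Q * Q) hQQ' hQ'Q
    have : Q * (Y * Q * Q) * mpow X (1 / 2 : ℝ) = Z := by
      rw [hZdef]
      calc Q * (Y * Q * Q) * mpow X (1 / 2 : ℝ)
          = Q * Y * Q * (Q * mpow X (1 / 2 : ℝ)) := by simp only [mul_assoc]
        _ = Q * Y * Q := by rw [hQQ', mul_one]
    rwa [this] at h
  set w := t' + -s' with hw
  have hXinv : Q * Q = Si * mpow C (-s') * Si := by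
    have h1 : X * (Si * mpow C (-s') * Si) = 1 := by
      calc X * (Si * mpow C (-s') * Si)
          = S * mpow C s' * ((S * Si) * mpow C (-s')) * Si := by
            rw [hXdef, hgm]; simp only [mul_assoc]
        _ = S * (mpow C s' * mpow C (-s')) * Si := by
            rw [hSSi, one_mul]; simp only [mul_assoc]
        _ = S * Si := by
            rw [mpow_add hC, add_neg_cancel, mpow_zero hC, mul_one]
        _ = 1 := hSSi
    have h2 : X * (Q * Q) = 1 := by
      rw [hQdef, mpow_add hX]
      norm_num
      calc X * mpow X (-1 : ℝ) = mpow X 1 * mpow X (-1 : ℝ) := by rw [mpow_one hX]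
        _ = mpow X 0 := by rw [mpow_add hX]; norm_num
        _ = 1 := mpow_zero hX
    rw [← Matrix.inv_eq_right_inv h2, ← Matrix.inv_eq_right_inv h1]
  have step2 : Y * Q * Q = S * mpow C w * Si := by
    calc Y * Q * Q = Y * (Q * Q) := by rw [mul_assoc]
      _ = S * mpow C t' * ((S * Si) * mpow C (-s')) * Si := by
          rw [hXinv, hYdef, hgm]; simp only [mul_assoc]
      _ = S * (mpow C t' * mpow C (-s')) * Si := by
          rw [hSSi, one_mul]; simp only [mul_assoc]
      _ = S * mpow C w * Si := by rw [mpow_add hC, hw]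
  have step3 : (S * mpow C w * Si).charpoly = (mpow C w).charpoly :=
    charpoly_conj hSSi hSiS
  have hcp : (hZ.isHermitian.cfc (fun x => x)).charpoly
      = (hC.isHermitian.cfc (fun x => x ^ w)).charpoly := by
    rw [cfc_id hZ.isHermitian, ← mpow_eq hC.isHermitian, step1, step2, step3]
  have hsum := sum_transfer hZ.isHermitian hC.isHermitian _ _ hcp
    (fun x => Real.log x ^ 2)
  rw [hrd]
  have : ∑ i, Real.log (hZ.isHermitian.eigenvalues i) ^ 2 = w ^ 2 * L := by
    rw [hsum, hL, Finset.mul_sum]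
    refine Finset.sum_congr rfl fun i _ => ?_
    rw [Real.log_rpow (hC.eigenvalues_pos i)]
    ring
  rw [this, Real.sqrt_mul (sq_nonneg w), Real.sqrt_sq_eq_abs, ← hD]
  have hw2 : w = (t - s) / D := by rw [hw, hs', ht']; ring
  rw [hw2, abs_div, abs_of_pos hDpos, div_mul_cancel₀ _ hDpos.ne', abs_sub_comm]
end
end

section
/- Fix 𝔸 = (A₁, …, Aₙ) ∈ ℙ_dⁿ. For every compact subset K ⊆ ℙ_d there exists L > 0 such that sup_{X ∈ K} |F_p(X; 𝔸) − F₁(X; 𝔸)| ≤ L·(p − 1) for all p ∈ (1, 2]. In particular, F_p(·; 𝔸) converges to F₁(·; 𝔸) uniformly on every compact subset of ℙ_d as p ↓ 1. -/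
noncomputable section

open Matrix
open scoped ComplexOrder

namespace Stmt6Aux

variable {d : ℕ} {X : Matrix (Fin d) (Fin d) ℂ}

lemma cfc_herm (hX : X.IsHermitian) (f : ℝ → ℝ) : (hX.cfc f).IsHermitian := by
  rw [← hX.cfc_eq]
  exact cfc_predicate (R := ℝ) f X

lemma cfc_mul (hX : X.IsHermitian) (f g : ℝ → ℝ) :
    hX.cfc f * hX.cfc g = hX.cfc (fun x => f x * g x) := by
  have key : ∀ a b c e f' g' : Matrix (Fin d) (Fin d) ℂ,
      (a * b * c) * (e * f' * g') = a * (b * (c * e) * f') * g' := by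
    intros; simp only [mul_assoc]
  simp only [Matrix.IsHermitian.cfc, Unitary.conjStarAlgAut_apply, key, SetLike.coe_mem, Unitary.star_mul_self_of_mem,
    mul_one, diagonal_mul_diagonal]
  congr! with i
  simp

lemma cfc_congr (hX : X.IsHermitian) {f g : ℝ → ℝ}
    (h : ∀ i, f (hX.eigenvalues i) = g (hX.eigenvalues i)) : hX.cfc f = hX.cfc g := by
  have hfun : (RCLike.ofReal ∘ f ∘ hX.eigenvalues : Fin d → ℂ)
      = RCLike.ofReal ∘ g ∘ hX.eigenvalues := by
    funext i; simp [Function.comp, h i]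
  unfold Matrix.IsHermitian.cfc
  rw [hfun]

lemma cfc_one (hX : X.IsHermitian) : hX.cfc (fun _ => 1) = 1 := by
  unfold Matrix.IsHermitian.cfc
  have hfun : (RCLike.ofReal ∘ (fun _ : ℝ => (1:ℝ)) ∘ hX.eigenvalues : Fin d → ℂ)
      = fun _ => 1 := by
    funext i; simp [Function.comp]
  rw [hfun, Unitary.conjStarAlgAut_apply, diagonal_one, mul_one, Unitary.mul_star_self_of_mem (SetLike.coe_mem _)]

lemma cfc_id (hX : X.IsHermitian) : hX.cfc (fun x => x) = X := by
  conv_rhs => rw [hX.spectral_theorem]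
  rfl

lemma cfc_trace (hX : X.IsHermitian) (f : ℝ → ℝ) :
    (hX.cfc f).trace = ∑ i, (f (hX.eigenvalues i) : ℂ) := by
  unfold Matrix.IsHermitian.cfc
  rw [Unitary.conjStarAlgAut_apply, Matrix.trace_mul_cycle,
    Unitary.star_mul_self_of_mem (SetLike.coe_mem _), one_mul, trace_diagonal]
  simp [Function.comp]

lemma cfc_sumsq (hX : X.IsHermitian) (f : ℝ → ℝ) :
    ∑ i, ∑ j, ‖(hX.cfc f) i j‖ ^ 2 = ∑ i, (f (hX.eigenvalues i)) ^ 2 := by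
  have h2 : (hX.cfc f)ᴴ = hX.cfc f := cfc_herm hX f
  have h1 : ((hX.cfc f)ᴴ * (hX.cfc f)).trace
      = ((∑ i, ∑ j, ‖(hX.cfc f) i j‖ ^ 2 : ℝ) : ℂ) := by
    push_cast
    rw [Finset.sum_comm]
    simp only [Matrix.trace, Matrix.diag, Matrix.mul_apply, Matrix.conjTranspose_apply]
    congr 1
    funext j
    congr 1
    funext i
    rw [RCLike.star_def, ← Complex.normSq_eq_conj_mul_self, Complex.normSq_eq_norm_sq]
    norm_cast
  have h3 : ((hX.cfc f)ᴴ * (hX.cfc f)).trace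
      = ((∑ i, (f (hX.eigenvalues i)) ^ 2 : ℝ) : ℂ) := by
    rw [h2, cfc_mul, cfc_trace]
    push_cast
    congr 1
    funext i
    ring
  exact_mod_cast h1.symm.trans h3

lemma cfc_inv (hX : X.PosDef) : hX.1.cfc (fun x => x⁻¹) = X⁻¹ := by
  have h := cfc_mul hX.1 (fun x => x) (fun x => x⁻¹)
  rw [cfc_id] at h
  rw [cfc_congr hX.1 (f := fun x => x * x⁻¹) (g := fun _ => 1)
    (fun i => mul_inv_cancel₀ (hX.eigenvalues_pos i).ne'), cfc_one] at h
  exact (Matrix.inv_eq_right_inv h).symm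

lemma posdef_conj {Y A : Matrix (Fin d) (Fin d) ℂ} (hA : A.PosDef) (hY : Y.IsHermitian)
    (hYu : IsUnit Y) : (Y * A * Y).PosDef := by
  refine posDef_iff_dotProduct_mulVec.mpr ⟨?_, ?_⟩
  · show (Y * A * Y)ᴴ = Y * A * Y
    rw [conjTranspose_mul, conjTranspose_mul, hY.eq, hA.1.eq, mul_assoc]
  · intro x hx
    have hYinj := Matrix.mulVec_injective_iff_isUnit.mpr hYu
    have hxY : Y *ᵥ x ≠ 0 := by
      intro h
      exact hx (hYinj (by simpa [Matrix.mulVec_zero] using h))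
    have := hA.dotProduct_mulVec_pos hxY
    have key : star (Y *ᵥ x) ⬝ᵥ (A *ᵥ (Y *ᵥ x)) = star x ⬝ᵥ ((Y * A * Y) *ᵥ x) := by
      rw [star_mulVec, hY.eq, mulVec_mulVec, ← dotProduct_mulVec, mulVec_mulVec, ← mul_assoc]
    rwa [key] at this

lemma rdist_nonneg {A B : Matrix (Fin d) (Fin d) ℂ} : 0 ≤ rdist A B := Real.sqrt_nonneg _

lemma rdist_bound {Ak : Matrix (Fin d) (Fin d) ℂ} (hX : X.PosDef) (hAk : Ak.PosDef) :
    rdist X Ak ≤ ‖(Ak * X⁻¹).trace‖ + ‖(Ak⁻¹ * X).trace‖ := by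
  set f : ℝ → ℝ := fun x => x ^ (-(1/2) : ℝ) with hf
  have hmp : mpow X (-(1/2 : ℝ)) = hX.1.cfc f := by
    unfold mpow fcal
    rw [dif_pos hX.1]
  set Y := hX.1.cfc f with hYdef
  have hY : Y.IsHermitian := cfc_herm _ _
  have hYY : Y * Y = X⁻¹ := by
    rw [hYdef, cfc_mul, cfc_congr hX.1 (g := fun x => x⁻¹) ?_, cfc_inv hX]
    intro i
    have hi := hX.eigenvalues_pos i
    rw [hf]
    simp only
    rw [← Real.rpow_add hi]
    norm_num
    exact (Real.rpow_neg_one _)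
  have hYu : IsUnit Y := by
    rw [Matrix.isUnit_iff_isUnit_det]
    have : IsUnit (Y.det * Y.det) := by
      rw [← Matrix.det_mul, hYY, ← Matrix.isUnit_iff_isUnit_det]
      exact hX.inv.isUnit
    exact isUnit_of_mul_isUnit_left this
  have hB : (Y * Ak * Y).PosDef := posdef_conj hAk hY hYu
  set μ := hB.1.eigenvalues with hμdef
  have hμ : ∀ i, 0 < μ i := hB.eigenvalues_pos
  have hrd : rdist X Ak = Real.sqrt (∑ i, (Real.log (μ i)) ^ 2) := by
    rw [rdist, hmp]
    have : mlog (Y * Ak * Y) = hB.1.cfc Real.log := by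
      unfold mlog fcal
      rw [dif_pos hB.1]
    rw [this, hsNorm, cfc_sumsq]
  -- trace identities
  have htr1 : ((∑ i, μ i : ℝ) : ℂ) = (Ak * X⁻¹).trace := by
    have h := cfc_trace hB.1 (fun x => x)
    rw [cfc_id] at h
    rw [Matrix.trace_mul_cycle, hYY, Matrix.trace_mul_comm] at h
    rw [h]
    push_cast
    rfl
  have htr2 : ((∑ i, (μ i)⁻¹ : ℝ) : ℂ) = (Ak⁻¹ * X).trace := by
    have h := cfc_trace hB.1 (fun x => x⁻¹)
    rw [cfc_inv hB] at h
    have hXdet : IsUnit X.det := hX.det_pos.ne'.isUnit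
    have hBinv : (Y * Ak * Y)⁻¹ = Y⁻¹ * Ak⁻¹ * Y⁻¹ := by
      rw [Matrix.mul_inv_rev, Matrix.mul_inv_rev, mul_assoc]
    have hYinv : Y⁻¹ * Y⁻¹ = X := by
      rw [← Matrix.mul_inv_rev, hYY, Matrix.nonsing_inv_nonsing_inv X hXdet]
    rw [hBinv, Matrix.trace_mul_cycle, hYinv, Matrix.trace_mul_comm] at h
    rw [h]
    push_cast
    rfl
  have hsums : ∑ i, μ i ≤ ‖(Ak * X⁻¹).trace‖ := by
    have : ∑ i, μ i = ((Ak * X⁻¹).trace).re := by rw [← htr1, Complex.ofReal_re]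
    rw [this]
    exact Complex.re_le_norm _
  have hsums2 : ∑ i, (μ i)⁻¹ ≤ ‖(Ak⁻¹ * X).trace‖ := by
    have : ∑ i, (μ i)⁻¹ = ((Ak⁻¹ * X).trace).re := by rw [← htr2, Complex.ofReal_re]
    rw [this]
    exact Complex.re_le_norm _
  -- log bound
  have hlog : ∀ i, |Real.log (μ i)| ≤ μ i + (μ i)⁻¹ := by
    intro i
    have hi := hμ i
    rcases le_or_gt 1 (μ i) with h1 | h1
    · rw [abs_of_nonneg (Real.log_nonneg h1)]
      have := Real.log_le_sub_one_of_pos hi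
      have hipos : 0 < (μ i)⁻¹ := by positivity
      linarith
    · rw [abs_of_nonpos (Real.log_nonpos hi.le h1.le)]
      rw [← Real.log_inv]
      have := Real.log_le_sub_one_of_pos (show (0:ℝ) < (μ i)⁻¹ by positivity)
      linarith
  have step1 : Real.sqrt (∑ i, (Real.log (μ i)) ^ 2) ≤ ∑ i, |Real.log (μ i)| := by
    have heq : ∑ i, (Real.log (μ i)) ^ 2 = ∑ i, |Real.log (μ i)| ^ 2 := by
      simp [sq_abs]
    rw [heq]
    refine le_trans (Real.sqrt_le_sqrt
      (Finset.sum_sq_le_sq_sum_of_nonneg (fun i _ => abs_nonneg _))) ?_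
    rw [Real.sqrt_sq (Finset.sum_nonneg fun i _ => abs_nonneg _)]
  calc rdist X Ak = Real.sqrt (∑ i, (Real.log (μ i)) ^ 2) := hrd
    _ ≤ ∑ i, |Real.log (μ i)| := step1
    _ ≤ ∑ i, (μ i + (μ i)⁻¹) := Finset.sum_le_sum fun i _ => hlog i
    _ = (∑ i, μ i) + ∑ i, (μ i)⁻¹ := Finset.sum_add_distrib
    _ ≤ ‖(Ak * X⁻¹).trace‖ + ‖(Ak⁻¹ * X).trace‖ := add_le_add hsums hsums2

lemma scalar_key {t p : ℝ} (ht : 0 ≤ t) (hp1 : 1 < p) (hp2 : p ≤ 2) :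
    |t ^ p - t| ≤ (p - 1) * (1 + t ^ 2) := by
  rcases eq_or_lt_of_le ht with h0 | h0
  · rw [← h0, Real.zero_rpow (by linarith : p ≠ 0)]
    simp only [sub_zero, abs_zero, zero_sub, abs_neg]
    nlinarith
  rw [abs_sub_le_iff]
  constructor
  · -- t^p - t ≤ (p-1)(1+t²)
    have hgm := Real.geom_mean_le_arith_mean2_weighted (w₁ := 2 - p) (w₂ := p - 1)
      (p₁ := 1) (p₂ := t) (by linarith) (by linarith) zero_le_one ht (by ring)
    rw [Real.one_rpow, one_mul, mul_one] at hgm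
    -- hgm : t ^ (p-1) ≤ (2-p) + (p-1)*t
    have hsplit : t ^ p = t * t ^ (p - 1) := by
      rw [show t * t ^ (p - 1) = t ^ (1:ℝ) * t ^ (p - 1) by rw [Real.rpow_one],
        ← Real.rpow_add h0]
      norm_num
    nlinarith [Real.rpow_nonneg ht (p - 1), sq_nonneg t, sq_nonneg (t - 1)]
  · -- t - t^p ≤ (p-1)(1+t²)
    have hp0 : 0 < p := by linarith
    have hgm := Real.geom_mean_le_arith_mean2_weighted (w₁ := 1 / p) (w₂ := 1 - 1 / p)
      (p₁ := t ^ p) (p₂ := 1) (by positivity)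
      (by rw [sub_nonneg]; rw [div_le_one hp0]; linarith)
      (Real.rpow_nonneg ht p) zero_le_one (by field_simp; ring)
    rw [Real.one_rpow, mul_one, mul_one] at hgm
    have hpow : (t ^ p) ^ (1 / p : ℝ) = t := by
      rw [← Real.rpow_mul ht, mul_one_div, div_self hp0.ne', Real.rpow_one]
    rw [hpow] at hgm
    -- hgm : t ≤ (1/p) * t^p + (1 - 1/p)
    have htp : 0 ≤ t ^ p := Real.rpow_nonneg ht p
    have h1p : 1 / p ≤ 1 := by rw [div_le_one hp0]; linarith
    have h1p' : 0 < 1 / p := by positivity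
    have hq0 : (2 - p) ≤ 1 / p := by
      rw [le_div_iff₀ hp0]
      nlinarith [sq_nonneg (p - 1)]
    have hq : 1 - 1 / p ≤ p - 1 := by linarith
    nlinarith [mul_nonneg (by linarith : (0:ℝ) ≤ 1 - 1 / p) htp,
      mul_nonneg (by linarith : (0:ℝ) ≤ p - 1) (sq_nonneg t)]

end Stmt6Aux

open Stmt6Aux in
/-- uniform convergence of F_p to F₁ on compact subsets of ℙ_d as p ↓ 1,
with a linear rate L·(p-1). -/
theorem stmt6 {d n : ℕ} (hn : 0 < n) (A : Fin n → Matrix (Fin d) (Fin d) ℂ)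
    (hA : ∀ k, (A k).PosDef)
    (K : Set (Matrix (Fin d) (Fin d) ℂ)) (hK : IsCompact K) (hKP : ∀ X ∈ K, X.PosDef) :
    ∃ L > (0 : ℝ), ∀ p ∈ Set.Ioc (1 : ℝ) 2, ∀ X ∈ K,
      |Fobj p A X - Fobj 1 A X| ≤ L * (p - 1) := by
  set g : Matrix (Fin d) (Fin d) ℂ → ℝ :=
    fun X => ∑ k, (‖(A k * X⁻¹).trace‖ + ‖((A k)⁻¹ * X).trace‖) with hg_def
  have hg : ContinuousOn g K := by
    apply continuousOn_finset_sum
    intro k _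
    have hinv : ContinuousOn (fun X : Matrix (Fin d) (Fin d) ℂ => X⁻¹) K := by
      intro X hXK
      refine (continuousAt_matrix_inv X ?_).continuousWithinAt
      rw [Ring.inverse_eq_inv']
      exact continuousAt_inv₀ (hKP X hXK).det_pos.ne'
    have h1 : Continuous fun M : Matrix (Fin d) (Fin d) ℂ => ‖(A k * M).trace‖ :=
      ((continuous_const.matrix_mul continuous_id).matrix_trace).norm
    have h2 : Continuous fun M : Matrix (Fin d) (Fin d) ℂ => ‖((A k)⁻¹ * M).trace‖ :=
      ((continuous_const.matrix_mul continuous_id).matrix_trace).norm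
    exact (h1.comp_continuousOn hinv).add h2.continuousOn
  obtain ⟨C, hC⟩ := hK.exists_bound_of_continuousOn hg
  refine ⟨1 + C ^ 2, by positivity, ?_⟩
  intro p hp X hXK
  have hbd : ∀ k, rdist X (A k) ≤ C := by
    intro k
    refine (rdist_bound (hKP X hXK) (hA k)).trans ?_
    have hmem : ‖(A k * X⁻¹).trace‖ + ‖((A k)⁻¹ * X).trace‖ ≤ g X := by
      have h' := Finset.single_le_sum
        (f := fun j : Fin n => ‖(A j * X⁻¹).trace‖ + ‖((A j)⁻¹ * X).trace‖)
        (fun i _ => add_nonneg (norm_nonneg _) (norm_nonneg _)) (Finset.mem_univ k)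
      simpa [hg_def] using h'
    refine hmem.trans ?_
    calc g X ≤ |g X| := le_abs_self _
      _ = ‖g X‖ := (Real.norm_eq_abs _).symm
      _ ≤ C := hC X hXK
  have hterm : ∀ k, |rdist X (A k) ^ p - rdist X (A k) ^ (1 : ℝ)| ≤ (p - 1) * (1 + C ^ 2) := by
    intro k
    have h0 := rdist_nonneg (A := X) (B := A k)
    rw [Real.rpow_one]
    refine (scalar_key h0 hp.1 hp.2).trans ?_
    have : rdist X (A k) ^ 2 ≤ C ^ 2 := by nlinarith [hbd k]
    have hp1 : 0 ≤ p - 1 := by linarith [hp.1]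
    nlinarith
  have hdiff : Fobj p A X - Fobj 1 A X
      = (1 / (n : ℝ)) * ∑ k, (rdist X (A k) ^ p - rdist X (A k) ^ (1 : ℝ)) := by
    rw [Fobj, Fobj, ← mul_sub, ← Finset.sum_sub_distrib]
  rw [hdiff, abs_mul, abs_of_nonneg (by positivity : (0:ℝ) ≤ 1 / (n : ℝ))]
  have hn' : (0:ℝ) < (n : ℝ) := by exact_mod_cast hn
  calc (1 / (n : ℝ)) * |∑ k, (rdist X (A k) ^ p - rdist X (A k) ^ (1 : ℝ))|
      ≤ (1 / (n : ℝ)) * ∑ k, |rdist X (A k) ^ p - rdist X (A k) ^ (1 : ℝ)| :=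
        mul_le_mul_of_nonneg_left (Finset.abs_sum_le_sum_abs
          (fun k => rdist X (A k) ^ p - rdist X (A k) ^ (1 : ℝ)) Finset.univ) (by positivity)
    _ ≤ (1 / (n : ℝ)) * ∑ _k : Fin n, (p - 1) * (1 + C ^ 2) :=
        mul_le_mul_of_nonneg_left (Finset.sum_le_sum fun k _ => hterm k) (by positivity)
    _ = (1 + C ^ 2) * (p - 1) := by
        rw [Finset.sum_const, Finset.card_univ, Fintype.card_fin, nsmul_eq_mul]
        field_simp
end
end

section
/- Fix 𝔸 = (A₁, …, Aₙ) ∈ ℙ_dⁿ and for each p ∈ (1, 2] let M_p denote the unique minimizer of F_p(·; 𝔸). Then the family {M_p}_{p ∈ (1,2]} is bounded in (ℙ_d, δ): there exists R > 0 such that δ(M_p, I) ≤ R for all p ∈ (1, 2]. -/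
noncomputable section

open Matrix
open scoped ComplexOrder

section Helpers

variable {d : ℕ} {B : Matrix (Fin d) (Fin d) ℂ}

private lemma star_mul_self_eig (hB : B.IsHermitian) :
    star (hB.eigenvectorUnitary : Matrix (Fin d) (Fin d) ℂ) *
      (hB.eigenvectorUnitary : Matrix (Fin d) (Fin d) ℂ) = 1 :=
  Unitary.star_mul_self_of_mem (SetLike.coe_mem _)

private lemma mul_star_self_eig (hB : B.IsHermitian) :
    (hB.eigenvectorUnitary : Matrix (Fin d) (Fin d) ℂ) *
      star (hB.eigenvectorUnitary : Matrix (Fin d) (Fin d) ℂ) = 1 :=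
  Unitary.mul_star_self_of_mem (SetLike.coe_mem _)

private lemma myCfcMul (hB : B.IsHermitian) (f g : ℝ → ℝ) :
    hB.cfc f * hB.cfc g = hB.cfc (fun x => f x * g x) := by
  unfold Matrix.IsHermitian.cfc
  set u : Matrix (Fin d) (Fin d) ℂ := (hB.eigenvectorUnitary : Matrix (Fin d) (Fin d) ℂ) with hu
  have h1 : ∀ X : Matrix (Fin d) (Fin d) ℂ, star u * (u * X) = X := by
    intro X
    rw [← mul_assoc, star_mul_self_eig hB, one_mul]
  calc (u * diagonal (RCLike.ofReal ∘ f ∘ hB.eigenvalues) * star u) *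
        (u * diagonal (RCLike.ofReal ∘ g ∘ hB.eigenvalues) * star u)
      = u * (diagonal (RCLike.ofReal ∘ f ∘ hB.eigenvalues) *
          (star u * (u * (diagonal (RCLike.ofReal ∘ g ∘ hB.eigenvalues) * star u)))) := by
        simp only [mul_assoc]
    _ = u * (diagonal (RCLike.ofReal ∘ f ∘ hB.eigenvalues) *
          diagonal (RCLike.ofReal ∘ g ∘ hB.eigenvalues)) * star u := by
        rw [h1]; simp only [mul_assoc]
    _ = u * diagonal (RCLike.ofReal ∘ (fun x => f x * g x) ∘ hB.eigenvalues) * star u := by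
        rw [diagonal_mul_diagonal]
        have hfun : (fun i => (RCLike.ofReal ∘ f ∘ hB.eigenvalues) i *
            (RCLike.ofReal ∘ g ∘ hB.eigenvalues) i)
            = (RCLike.ofReal ∘ (fun x => f x * g x) ∘ hB.eigenvalues : Fin d → ℂ) := by
          funext i
          simp [Function.comp]
        rw [hfun]

private lemma myCfcHerm (hB : B.IsHermitian) (f : ℝ → ℝ) : (hB.cfc f).IsHermitian := by
  show (hB.cfc f)ᴴ = hB.cfc f
  unfold Matrix.IsHermitian.cfc
  set u : Matrix (Fin d) (Fin d) ℂ := (hB.eigenvectorUnitary : Matrix (Fin d) (Fin d) ℂ) with hu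
  have hd : (diagonal (RCLike.ofReal ∘ f ∘ hB.eigenvalues) : Matrix (Fin d) (Fin d) ℂ)ᴴ
      = diagonal (RCLike.ofReal ∘ f ∘ hB.eigenvalues) := by
    rw [diagonal_conjTranspose]
    have hfun : (star (RCLike.ofReal ∘ f ∘ hB.eigenvalues) : Fin d → ℂ)
        = RCLike.ofReal ∘ f ∘ hB.eigenvalues := by
      funext i
      simp [Pi.star_apply, RCLike.star_def, RCLike.conj_ofReal]
    rw [hfun]
  calc (u * diagonal (RCLike.ofReal ∘ f ∘ hB.eigenvalues) * star u)ᴴ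
      = (star u)ᴴ * (diagonal (RCLike.ofReal ∘ f ∘ hB.eigenvalues))ᴴ * uᴴ := by
        rw [conjTranspose_mul, conjTranspose_mul]; simp only [mul_assoc]
    _ = u * diagonal (RCLike.ofReal ∘ f ∘ hB.eigenvalues) * star u := by
        rw [hd, ← star_eq_conjTranspose, ← star_eq_conjTranspose, star_star]

private lemma myCfcCongr (hB : B.IsHermitian) (f g : ℝ → ℝ)
    (h : ∀ i, f (hB.eigenvalues i) = g (hB.eigenvalues i)) : hB.cfc f = hB.cfc g := by
  unfold Matrix.IsHermitian.cfc
  have : (RCLike.ofReal ∘ f ∘ hB.eigenvalues : Fin d → ℂ)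
      = RCLike.ofReal ∘ g ∘ hB.eigenvalues := by
    funext i
    simp [Function.comp, h i]
  rw [this]

private lemma myCfcOne (hB : B.IsHermitian) : hB.cfc (fun _ => 1) = 1 := by
  unfold Matrix.IsHermitian.cfc
  have hfun : (RCLike.ofReal ∘ (fun _ => (1:ℝ)) ∘ hB.eigenvalues : Fin d → ℂ)
      = (fun _ => (1:ℂ)) := by
    funext i
    simp [Function.comp]
  rw [hfun]
  rw [show (diagonal (fun _ => (1:ℂ)) : Matrix (Fin d) (Fin d) ℂ) = 1 from diagonal_one]
  rw [Unitary.conjStarAlgAut_apply, mul_one, mul_star_self_eig hB]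

private lemma myCfcId (hB : B.IsHermitian) : hB.cfc (fun x => x) = B := by
  conv_rhs => rw [hB.spectral_theorem]
  rfl

private lemma myCfcAddSmul (hB : B.IsHermitian) (a b : ℝ) :
    hB.cfc (fun x => a + b * x) = (a : ℂ) • 1 + (b : ℂ) • B := by
  conv_rhs => rw [hB.spectral_theorem]
  unfold Matrix.IsHermitian.cfc
  set u : Matrix (Fin d) (Fin d) ℂ := (hB.eigenvectorUnitary : Matrix (Fin d) (Fin d) ℂ) with hu
  have hdiag : diagonal (RCLike.ofReal ∘ (fun x => a + b * x) ∘ hB.eigenvalues)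
      = (a:ℂ) • (1 : Matrix (Fin d) (Fin d) ℂ) +
        (b:ℂ) • diagonal (RCLike.ofReal ∘ hB.eigenvalues) := by
    ext i j
    rcases eq_or_ne i j with rfl | h
    · simp only [Function.comp_apply, Matrix.diagonal_apply_eq, Matrix.add_apply,
        Matrix.smul_apply, Matrix.one_apply_eq, smul_eq_mul, mul_one,
        show (RCLike.ofReal : ℝ → ℂ) = Complex.ofReal from rfl]
      push_cast
      ring
    · simp [Matrix.diagonal_apply_ne _ h, Matrix.one_apply_ne h]
  simp only [Unitary.conjStarAlgAut_apply]
  rw [hdiag, mul_add, add_mul, mul_smul_comm, smul_mul_assoc, mul_smul_comm, smul_mul_assoc,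
    mul_one, mul_star_self_eig hB]

private lemma myCfcPosSemidef (hB : B.IsHermitian) (f : ℝ → ℝ)
    (h : ∀ i, 0 ≤ f (hB.eigenvalues i)) : (hB.cfc f).PosSemidef := by
  unfold Matrix.IsHermitian.cfc
  have hdiag : (diagonal (RCLike.ofReal ∘ f ∘ hB.eigenvalues) :
      Matrix (Fin d) (Fin d) ℂ).PosSemidef := by
    apply PosSemidef.diagonal
    intro i
    simp only [Function.comp_apply, Pi.zero_apply]
    rw [RCLike.le_iff_re_im]
    constructor
    · simpa using h i
    · simp
  have := hdiag.mul_mul_conjTranspose_same (hB.eigenvectorUnitary : Matrix (Fin d) (Fin d) ℂ)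
  rwa [← star_eq_conjTranspose] at this

private lemma mySpecCfc (hB : B.IsHermitian) (g : ℝ → ℝ) (x : ℝ) :
    x ∈ spectrum ℝ (hB.cfc g) ↔ ∃ i, g (hB.eigenvalues i) = x := by
  unfold Matrix.IsHermitian.cfc
  rw [Unitary.conjStarAlgAut_apply, Unitary.spectrum_star_right_conjugate, ← spectrum.algebraMap_mem_iff ℂ, spectrum_diagonal,
    RCLike.algebraMap_eq_ofReal]
  constructor
  · rintro ⟨i, hi⟩
    refine ⟨i, ?_⟩
    have : ((g (hB.eigenvalues i) : ℂ)) = ((x : ℂ)) := hi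
    exact_mod_cast this
  · rintro ⟨i, hi⟩
    exact ⟨i, by simp [Function.comp_apply, hi]⟩

private lemma myHsNormSq (M : Matrix (Fin d) (Fin d) ℂ) :
    ∑ i, ∑ j, ‖M i j‖ ^ 2 = RCLike.re (Matrix.trace (Mᴴ * M)) := by
  rw [Matrix.trace]
  simp only [Matrix.diag_apply, Matrix.mul_apply, Matrix.conjTranspose_apply, map_sum]
  rw [Finset.sum_comm]
  congr 1
  funext i
  congr 1
  funext j
  rw [RCLike.star_def, RCLike.conj_mul, ← RCLike.ofReal_pow, RCLike.ofReal_re]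

private lemma myHsNormCfc (hB : B.IsHermitian) (f : ℝ → ℝ) :
    hsNorm (hB.cfc f) = Real.sqrt (∑ i, f (hB.eigenvalues i) ^ 2) := by
  unfold hsNorm
  congr 1
  rw [myHsNormSq, (myCfcHerm hB f).eq, myCfcMul hB f f]
  unfold Matrix.IsHermitian.cfc
  rw [Unitary.conjStarAlgAut_apply, Matrix.trace_mul_cycle, star_mul_self_eig hB, one_mul, trace_diagonal]
  rw [map_sum]
  congr 1
  funext i
  simp [Function.comp, ← Complex.ofReal_mul, sq]

private lemma myPosDefConj {A V : Matrix (Fin d) (Fin d) ℂ} (hA : A.PosDef)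
    (hV : V.IsHermitian) (hU : IsUnit V) : (V * A * V).PosDef := by
  refine Matrix.PosDef.of_dotProduct_mulVec_pos ?_ ?_
  · show (V * A * V)ᴴ = V * A * V
    rw [conjTranspose_mul, conjTranspose_mul, hA.1.eq, hV.eq]
    simp [mul_assoc, hV.eq]
  · intro x hx
    have hVx : V *ᵥ x ≠ 0 := by
      intro h
      apply hx
      have hinj : Function.Injective V.mulVec := Matrix.mulVec_injective_iff_isUnit.2 hU
      have : V *ᵥ x = V *ᵥ 0 := by simpa [Matrix.mulVec_zero] using h
      exact hinj this
    have key : star x ⬝ᵥ (V * A * V) *ᵥ x = star (V *ᵥ x) ⬝ᵥ A *ᵥ (V *ᵥ x) := by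
      rw [Matrix.star_mulVec, hV.eq, ← Matrix.mulVec_mulVec, ← Matrix.mulVec_mulVec,
        Matrix.dotProduct_mulVec (star x) V]
    rw [key]
    exact hA.dotProduct_mulVec_pos hVx

private lemma myRdistNonneg (X Y : Matrix (Fin d) (Fin d) ℂ) : 0 ≤ rdist X Y :=
  Real.sqrt_nonneg _

/-- KEY: δ(X, 1) ≤ √d (c_A + δ(X, A)). -/
private lemma key_lemma {X A : Matrix (Fin d) (Fin d) ℂ} (hX : X.PosDef) (hA : A.PosDef) :
    rdist X 1 ≤ Real.sqrt d * ((∑ i, |Real.log (hA.1.eigenvalues i)|) + rdist X A) := by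
  have hcA0 : 0 ≤ ∑ i, |Real.log (hA.1.eigenvalues i)| :=
    Finset.sum_nonneg fun _ _ => abs_nonneg _
  have hr0 : 0 ≤ rdist X A := myRdistNonneg X A
  set cA := ∑ i, |Real.log (hA.1.eigenvalues i)| with hcAdef
  set c := cA + rdist X A with hcdef
  have hc0 : 0 ≤ c := add_nonneg hcA0 hr0
  rcases Nat.eq_zero_or_pos d with hd | hd
  · subst hd
    have h1 : rdist X 1 = 0 := by
      unfold rdist hsNorm
      simp
    rw [h1]
    positivity
  haveI : Nonempty (Fin d) := ⟨⟨0, hd⟩⟩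
  have hXh := hX.1
  have hlam : ∀ i, 0 < hXh.eigenvalues i := hX.eigenvalues_pos
  have hVeq : mpow X (-(1 / 2 : ℝ)) = hXh.cfc (fun x => x ^ (-(1 / 2 : ℝ))) := by
    unfold mpow fcal
    exact dif_pos hXh
  set V := hXh.cfc (fun x => x ^ (-(1 / 2 : ℝ))) with hVdef
  set W := hXh.cfc (fun x => x ^ ((1 / 2 : ℝ))) with hWdef
  have hWV : W * V = 1 := by
    rw [hWdef, hVdef]
    simp only [myCfcMul hXh]
    rw [myCfcCongr hXh (fun x => x ^ ((1 / 2 : ℝ)) * x ^ (-(1 / 2 : ℝ))) (fun _ => 1)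
      (fun i => by simp only [← Real.rpow_add (hlam i)]; norm_num), myCfcOne]
  have hVW : V * W = 1 := by
    rw [hWdef, hVdef]
    simp only [myCfcMul hXh]
    rw [myCfcCongr hXh (fun x => x ^ (-(1 / 2 : ℝ)) * x ^ ((1 / 2 : ℝ))) (fun _ => 1)
      (fun i => by simp only [← Real.rpow_add (hlam i)]; norm_num), myCfcOne]
  have hWW : W * W = X := by
    rw [hWdef]
    simp only [myCfcMul hXh]
    rw [myCfcCongr hXh (fun x => x ^ ((1 / 2 : ℝ)) * x ^ ((1 / 2 : ℝ))) (fun x => x)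
      (fun i => by simp only [← Real.rpow_add (hlam i)]; norm_num [Real.rpow_one]), myCfcId]
  have hVunit : IsUnit V := ⟨⟨V, W, hVW, hWV⟩, rfl⟩
  set M := V * A * V with hMdef
  have hMpd : M.PosDef := myPosDefConj hA (myCfcHerm hXh _) hVunit
  have hMh := hMpd.1
  have hmu : ∀ j, 0 < hMh.eigenvalues j := hMpd.eigenvalues_pos
  have hrXA : rdist X A = Real.sqrt (∑ j, Real.log (hMh.eigenvalues j) ^ 2) := by
    unfold rdist
    rw [hVeq, ← hMdef]
    have : mlog M = hMh.cfc Real.log := by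
      unfold mlog fcal
      exact dif_pos hMh
    rw [this, myHsNormCfc]
  have hlog_mu : ∀ j, |Real.log (hMh.eigenvalues j)| ≤ rdist X A := by
    intro j
    rw [hrXA, ← Real.sqrt_sq_eq_abs]
    exact Real.sqrt_le_sqrt (Finset.single_le_sum
      (fun i _ => sq_nonneg (Real.log (hMh.eigenvalues i))) (Finset.mem_univ j))
  have hWMW : W * M * W = A := by
    rw [hMdef]
    calc W * (V * A * V) * W = (W * V) * A * (V * W) := by simp only [mul_assoc]
      _ = A := by rw [hWV, hVW, one_mul, mul_one]
  have hWsmul : ∀ t : ℝ, W * ((t:ℂ) • (1 : Matrix (Fin d) (Fin d) ℂ)) * W = (t:ℂ) • X := by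
    intro t
    rw [mul_smul_comm, smul_mul_assoc, mul_one, hWW]
  have hWherm : Wᴴ = W := myCfcHerm hXh _
  -- spectrum nonneg from PosSemidef
  have spec_nonneg : ∀ {Bm : Matrix (Fin d) (Fin d) ℂ}, Bm.PosSemidef → ∀ x : ℝ,
      x ∈ spectrum ℝ Bm → 0 ≤ x := by
    intro Bm hBm x hx
    rw [hBm.1.spectrum_real_eq_range_eigenvalues] at hx
    obtain ⟨i, rfl⟩ := hx
    exact hBm.eigenvalues_nonneg i
  -- upper bound
  have hup : ∀ i, Real.log (hXh.eigenvalues i) ≤ c := by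
    intro i
    obtain ⟨j0, -, hj0⟩ := Finset.exists_mem_eq_inf' (Finset.univ_nonempty (α := Fin d))
      hMh.eigenvalues
    set m := Finset.univ.inf' Finset.univ_nonempty hMh.eigenvalues with hmdef
    have hmpos : 0 < m := hj0 ▸ hmu j0
    have hmle : ∀ j, m ≤ hMh.eigenvalues j := fun j => Finset.inf'_le _ (Finset.mem_univ _)
    have P1 : (hMh.cfc (fun x => x - m)).PosSemidef :=
      myCfcPosSemidef hMh _ (fun j => sub_nonneg.2 (hmle j))
    have e1 : hMh.cfc (fun x => x - m) = M - (m:ℂ) • 1 := by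
      rw [myCfcCongr hMh (fun x => x - m) (fun x => (-m) + 1 * x) (fun i => by ring), myCfcAddSmul]
      push_cast
      module
    rw [e1] at P1
    have P2 := P1.mul_mul_conjTranspose_same W
    rw [hWherm] at P2
    have e2 : W * (M - (m:ℂ) • 1) * W = A - (m:ℂ) • X := by
      rw [mul_sub, sub_mul, hWMW, hWsmul]
    rw [e2] at P2
    have P3 : (hA.1.cfc (fun x => Real.exp cA - x)).PosSemidef := by
      apply myCfcPosSemidef hA.1
      intro j
      have h1 : Real.log (hA.1.eigenvalues j) ≤ cA :=
        le_trans (le_abs_self _) (Finset.single_le_sum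
          (f := fun i => |Real.log (hA.1.eigenvalues i)|)
          (fun i _ => abs_nonneg _) (Finset.mem_univ j))
      have h2 : hA.1.eigenvalues j ≤ Real.exp cA := by
        rw [← Real.exp_log (hA.eigenvalues_pos j)]
        exact Real.exp_le_exp.2 h1
      linarith
    have e3 : hA.1.cfc (fun x => Real.exp cA - x)
        = (Real.exp cA : ℂ) • 1 - A := by
      rw [myCfcCongr hA.1 (fun x => Real.exp cA - x) (fun x => Real.exp cA + (-1) * x) (fun i => by ring), myCfcAddSmul]
      push_cast
      module
    rw [e3] at P3
    have P4 : ((Real.exp cA : ℂ) • (1 : Matrix (Fin d) (Fin d) ℂ)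
        - (m:ℂ) • X).PosSemidef := by
      have := P3.add P2
      have e4 : ((Real.exp cA : ℂ) • (1 : Matrix (Fin d) (Fin d) ℂ) - A) + (A - (m:ℂ) • X)
          = (Real.exp cA : ℂ) • 1 - (m:ℂ) • X := by module
      rwa [e4] at this
    have e5 : hXh.cfc (fun x => Real.exp cA + (-m) * x)
        = (Real.exp cA : ℂ) • 1 - (m:ℂ) • X := by
      rw [myCfcAddSmul]
      push_cast
      module
    have hmem : Real.exp cA + (-m) * hXh.eigenvalues i
        ∈ spectrum ℝ (hXh.cfc (fun x => Real.exp cA + (-m) * x)) :=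
      (mySpecCfc hXh _ _).2 ⟨i, rfl⟩
    rw [e5] at hmem
    have h5 : 0 ≤ Real.exp cA + (-m) * hXh.eigenvalues i := spec_nonneg P4 _ hmem
    have h6 : m * hXh.eigenvalues i ≤ Real.exp cA := by linarith
    have h7 : Real.exp (-(rdist X A)) ≤ m := by
      have hma : |Real.log m| ≤ rdist X A := hj0 ▸ hlog_mu j0
      have : -(rdist X A) ≤ Real.log m := by
        have := abs_le.1 hma
        linarith [this.1]
      calc Real.exp (-(rdist X A)) ≤ Real.exp (Real.log m) := Real.exp_le_exp.2 this
        _ = m := Real.exp_log hmpos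
    have h8 : hXh.eigenvalues i ≤ Real.exp c := by
      have h9 : Real.exp (-(rdist X A)) * hXh.eigenvalues i ≤ Real.exp cA :=
        le_trans (mul_le_mul_of_nonneg_right h7 (hlam i).le) h6
      rw [Real.exp_neg] at h9
      rw [hcdef, Real.exp_add]
      have := (inv_mul_le_iff₀ (Real.exp_pos (rdist X A))).1 h9
      linarith [this]
    exact (Real.log_le_iff_le_exp (hlam i)).2 h8
  -- lower bound
  have hdown : ∀ i, -c ≤ Real.log (hXh.eigenvalues i) := by
    intro i
    obtain ⟨j1, -, hj1⟩ := Finset.exists_mem_eq_sup' (Finset.univ_nonempty (α := Fin d))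
      hMh.eigenvalues
    set m := Finset.univ.sup' Finset.univ_nonempty hMh.eigenvalues with hmdef
    have hmpos : 0 < m := hj1 ▸ hmu j1
    have hmge : ∀ j, hMh.eigenvalues j ≤ m := fun j => Finset.le_sup' _ (Finset.mem_univ _)
    have P1 : (hMh.cfc (fun x => m - x)).PosSemidef :=
      myCfcPosSemidef hMh _ (fun j => sub_nonneg.2 (hmge j))
    have e1 : hMh.cfc (fun x => m - x) = (m:ℂ) • 1 - M := by
      rw [myCfcCongr hMh (fun x => m - x) (fun x => m + (-1) * x) (fun i => by ring), myCfcAddSmul]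
      push_cast
      module
    rw [e1] at P1
    have P2 := P1.mul_mul_conjTranspose_same W
    rw [hWherm] at P2
    have e2 : W * ((m:ℂ) • 1 - M) * W = (m:ℂ) • X - A := by
      rw [mul_sub, sub_mul, hWMW, hWsmul]
    rw [e2] at P2
    have P3 : (hA.1.cfc (fun x => x - Real.exp (-cA))).PosSemidef := by
      apply myCfcPosSemidef hA.1
      intro j
      have h1 : -cA ≤ Real.log (hA.1.eigenvalues j) := by
        have := le_trans (le_abs_self |Real.log (hA.1.eigenvalues j)|)
          (le_refl _)
        have h1' : |Real.log (hA.1.eigenvalues j)| ≤ cA :=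
          Finset.single_le_sum (f := fun i => |Real.log (hA.1.eigenvalues i)|)
            (fun i _ => abs_nonneg _) (Finset.mem_univ j)
        linarith [(abs_le.1 h1').1]
      have h2 : Real.exp (-cA) ≤ hA.1.eigenvalues j := by
        rw [← Real.exp_log (hA.eigenvalues_pos j)]
        exact Real.exp_le_exp.2 h1
      linarith
    have e3 : hA.1.cfc (fun x => x - Real.exp (-cA))
        = A - (Real.exp (-cA) : ℂ) • 1 := by
      rw [myCfcCongr hA.1 (fun x => x - Real.exp (-cA)) (fun x => (-Real.exp (-cA)) + 1 * x) (fun i => by ring), myCfcAddSmul]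
      push_cast
      module
    rw [e3] at P3
    have P4 : ((m:ℂ) • X - (Real.exp (-cA) : ℂ) • (1 : Matrix (Fin d) (Fin d) ℂ)).PosSemidef := by
      have := P2.add P3
      have e4 : ((m:ℂ) • X - A) + (A - (Real.exp (-cA) : ℂ) • 1)
          = (m:ℂ) • X - (Real.exp (-cA) : ℂ) • 1 := by module
      rwa [e4] at this
    have e5 : hXh.cfc (fun x => (-Real.exp (-cA)) + m * x)
        = (m:ℂ) • X - (Real.exp (-cA) : ℂ) • 1 := by
      rw [myCfcAddSmul]
      push_cast
      module
    have hmem : (-Real.exp (-cA)) + m * hXh.eigenvalues i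
        ∈ spectrum ℝ (hXh.cfc (fun x => (-Real.exp (-cA)) + m * x)) :=
      (mySpecCfc hXh _ _).2 ⟨i, rfl⟩
    rw [e5] at hmem
    have h5 : 0 ≤ (-Real.exp (-cA)) + m * hXh.eigenvalues i := spec_nonneg P4 _ hmem
    have h6 : Real.exp (-cA) ≤ m * hXh.eigenvalues i := by linarith
    have h7 : m ≤ Real.exp (rdist X A) := by
      have hma : |Real.log m| ≤ rdist X A := hj1 ▸ hlog_mu j1
      have : Real.log m ≤ rdist X A := le_trans (le_abs_self _) hma
      calc m = Real.exp (Real.log m) := (Real.exp_log hmpos).symm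
        _ ≤ Real.exp (rdist X A) := Real.exp_le_exp.2 this
    have h8 : Real.exp (-c) ≤ hXh.eigenvalues i := by
      have h9 : Real.exp (-cA) ≤ Real.exp (rdist X A) * hXh.eigenvalues i :=
        le_trans h6 (mul_le_mul_of_nonneg_right h7 (hlam i).le)
      have h10 : Real.exp (-c) = Real.exp (-cA) / Real.exp (rdist X A) := by
        rw [hcdef, ← Real.exp_sub]
        ring_nf
      rw [h10]
      rw [div_le_iff₀ (Real.exp_pos _)]
      calc Real.exp (-cA) ≤ Real.exp (rdist X A) * hXh.eigenvalues i := h9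
        _ = hXh.eigenvalues i * Real.exp (rdist X A) := mul_comm _ _
    exact (Real.le_log_iff_exp_le (hlam i)).2 h8
  have main : ∀ i, |Real.log (hXh.eigenvalues i)| ≤ c := fun i =>
    abs_le.2 ⟨hdown i, hup i⟩
  -- final bound
  have hY : mpow X (-(1 / 2 : ℝ)) * 1 * mpow X (-(1 / 2 : ℝ))
      = hXh.cfc (fun x => x ^ (-(1 / 2 : ℝ)) * x ^ (-(1 / 2 : ℝ))) := by
    rw [hVeq, mul_one]
    exact myCfcMul hXh _ _
  have hYh : (hXh.cfc (fun x => x ^ (-(1 / 2 : ℝ)) * x ^ (-(1 / 2 : ℝ)))).IsHermitian :=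
    myCfcHerm hXh _
  have hr1 : rdist X 1 = Real.sqrt (∑ j, Real.log (hYh.eigenvalues j) ^ 2) := by
    unfold rdist
    rw [hY]
    have : mlog (hXh.cfc (fun x => x ^ (-(1 / 2 : ℝ)) * x ^ (-(1 / 2 : ℝ))))
        = hYh.cfc Real.log := by
      unfold mlog fcal
      exact dif_pos hYh
    rw [this, myHsNormCfc]
  rw [hr1]
  have hbound : ∀ j, Real.log (hYh.eigenvalues j) ^ 2 ≤ c ^ 2 := by
    intro j
    have hmem : hYh.eigenvalues j ∈ spectrum ℝ
        (hXh.cfc (fun x => x ^ (-(1 / 2 : ℝ)) * x ^ (-(1 / 2 : ℝ)))) :=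
      hYh.eigenvalues_mem_spectrum_real j
    obtain ⟨i, hi⟩ := (mySpecCfc hXh _ _).1 hmem
    have hgi : (hXh.eigenvalues i) ^ (-(1 / 2 : ℝ)) * (hXh.eigenvalues i) ^ (-(1 / 2 : ℝ))
        = (hXh.eigenvalues i)⁻¹ := by
      rw [← Real.rpow_add (hlam i)]
      norm_num [Real.rpow_neg_one]
    have habs : |Real.log (hYh.eigenvalues j)| = |Real.log (hXh.eigenvalues i)| := by
      rw [← hi, hgi, Real.log_inv, abs_neg]
    have hle : |Real.log (hYh.eigenvalues j)| ≤ c := habs ▸ main i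
    calc Real.log (hYh.eigenvalues j) ^ 2 = |Real.log (hYh.eigenvalues j)| ^ 2 :=
          (sq_abs _).symm
      _ ≤ c ^ 2 := by
          apply pow_le_pow_left₀ (abs_nonneg _) hle
  calc Real.sqrt (∑ j, Real.log (hYh.eigenvalues j) ^ 2)
      ≤ Real.sqrt (∑ _j : Fin d, c ^ 2) :=
        Real.sqrt_le_sqrt (Finset.sum_le_sum fun j _ => hbound j)
    _ = Real.sqrt ((d : ℝ) * c ^ 2) := by
        rw [Finset.sum_const, Finset.card_univ, Fintype.card_fin, nsmul_eq_mul]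
    _ = Real.sqrt d * c := by
        rw [Real.sqrt_mul (Nat.cast_nonneg d), Real.sqrt_sq hc0]

end Helpers

set_option maxHeartbeats 2000000 in
/-- the family of minimizers {M_p}_{p ∈ (1,2]} is bounded in (ℙ_d, δ). -/
theorem stmt8 {d n : ℕ} (hn : 0 < n) (A : Fin n → Matrix (Fin d) (Fin d) ℂ)
    (hA : ∀ k, (A k).PosDef)
    (Mp : ℝ → Matrix (Fin d) (Fin d) ℂ)
    (hMp : ∀ p ∈ Set.Ioc (1 : ℝ) 2, (Mp p).PosDef ∧
      ∀ X : Matrix (Fin d) (Fin d) ℂ, X.PosDef → Fobj p A (Mp p) ≤ Fobj p A X) :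
    ∃ R > (0 : ℝ), ∀ p ∈ Set.Ioc (1 : ℝ) 2, rdist (Mp p) 1 ≤ R := by
  have hrd : ∀ (X Y : Matrix (Fin d) (Fin d) ℂ), 0 ≤ rdist X Y := fun _ _ => Real.sqrt_nonneg _
  set k0 : Fin n := ⟨0, hn⟩ with hk0
  set C := 1 + ∑ k, rdist (A k0) (A k) with hC
  have hC1 : 1 ≤ C := le_add_of_nonneg_right (Finset.sum_nonneg fun _ _ => hrd _ _)
  have hC0 : 0 ≤ C := zero_le_one.trans hC1
  set cA := ∑ i, |Real.log ((hA k0).1.eigenvalues i)| with hcAdef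
  have hcA0 : 0 ≤ cA := Finset.sum_nonneg fun _ _ => abs_nonneg _
  set Bnd := 1 + (n : ℝ) * C ^ 2 with hBnd
  have hBnd0 : 0 ≤ Bnd := by positivity
  refine ⟨1 + Real.sqrt d * (cA + Bnd), by positivity, ?_⟩
  intro p hp
  obtain ⟨hpd, hmin⟩ := hMp p hp
  have hp1 : 1 < p := hp.1
  have hp2 : p ≤ 2 := hp.2
  have hp0 : 0 < p := lt_trans one_pos hp1
  have hsum : ∑ k, rdist (Mp p) (A k) ^ p ≤ ∑ k, rdist (A k0) (A k) ^ p := by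
    have h := hmin (A k0) (hA k0)
    unfold Fobj at h
    have hnpos : (0:ℝ) < 1 / n := by positivity
    exact (mul_le_mul_iff_right₀ hnpos).1 h
  have hr : rdist (Mp p) (A k0) ^ p ≤ (n:ℝ) * C ^ 2 := by
    have hterm : ∀ k, rdist (A k0) (A k) ^ p ≤ C ^ 2 := by
      intro k
      have hk : rdist (A k0) (A k) ≤ C := by
        calc rdist (A k0) (A k) ≤ ∑ j, rdist (A k0) (A j) :=
              Finset.single_le_sum (f := fun j => rdist (A k0) (A j))
                (fun _ _ => hrd _ _) (Finset.mem_univ k)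
          _ ≤ C := le_add_of_nonneg_left zero_le_one
      calc rdist (A k0) (A k) ^ p ≤ C ^ p := Real.rpow_le_rpow (hrd _ _) hk hp0.le
        _ ≤ C ^ (2:ℝ) := Real.rpow_le_rpow_of_exponent_le hC1 hp2
        _ = C ^ 2 := by
            rw [show (2:ℝ) = ((2:ℕ):ℝ) by norm_num, Real.rpow_natCast]
    calc rdist (Mp p) (A k0) ^ p ≤ ∑ k, rdist (Mp p) (A k) ^ p :=
          Finset.single_le_sum (f := fun k => rdist (Mp p) (A k) ^ p)
            (fun k _ => Real.rpow_nonneg (hrd _ _) p) (Finset.mem_univ k0)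
      _ ≤ ∑ k, rdist (A k0) (A k) ^ p := hsum
      _ ≤ ∑ _k : Fin n, C ^ 2 := Finset.sum_le_sum fun k _ => hterm k
      _ = (n:ℝ) * C ^ 2 := by
          rw [Finset.sum_const, Finset.card_univ, Fintype.card_fin, nsmul_eq_mul]
  have hrB : rdist (Mp p) (A k0) ≤ Bnd := by
    rcases le_or_gt (rdist (Mp p) (A k0)) 1 with h | h
    · exact h.trans (le_add_of_nonneg_right (by positivity))
    · have h2 : rdist (Mp p) (A k0) ^ (1:ℝ) ≤ rdist (Mp p) (A k0) ^ p :=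
        Real.rpow_le_rpow_of_exponent_le h.le hp1.le
      rw [Real.rpow_one] at h2
      rw [hBnd]
      linarith
  calc rdist (Mp p) 1 ≤ Real.sqrt d * (cA + rdist (Mp p) (A k0)) := key_lemma hpd (hA k0)
    _ ≤ Real.sqrt d * (cA + Bnd) := by
        apply mul_le_mul_of_nonneg_left (add_le_add_right hrB cA) (Real.sqrt_nonneg _)
    _ ≤ 1 + Real.sqrt d * (cA + Bnd) := le_add_of_nonneg_left zero_le_one
end
end
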